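/- arXiv:0902.3036 — 18 statements merged into one kernel-verified Lean document; each statement's English description precedes it below -/
import Mathlib

section
/- For all x with 0 < x < 1, arcsin x > 6(√(1+x) − √(1−x)) / (4 + √(1+x) + √(1−x)). -/
open Real

lemma sin_lt_aux' {u : ℝ} (h0 : 0 < u) (h2 : u < π / 2) :
    u * Real.cos u < Real.sin u := by
  have hc : 0 < Real.cos u := Real.cos_pos_of_mem_Ioo ⟨by linarith, h2⟩
  have ht := Real.lt_tan h0 h2
  rw [Real.tan_eq_sin_div_cos, lt_div_iff₀ hc] at ht
  linarith

lemma cusa {t : ℝ} (h0 : 0 < t) (h2 : t < π / 2) :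
    3 * Real.sin t < t * (2 + Real.cos t) := by
  set g : ℝ → ℝ := fun t => t * (2 + Real.cos t) - 3 * Real.sin t with hg
  have hderiv : ∀ t : ℝ, HasDerivAt g ((2 + Real.cos t) + t * (-Real.sin t) - 3 * Real.cos t) t := by
    intro t
    have h1 : HasDerivAt (fun t : ℝ => t * (2 + Real.cos t))
        (1 * (2 + Real.cos t) + t * (0 + -Real.sin t)) t :=
      (hasDerivAt_id t).mul ((hasDerivAt_const t 2).add (Real.hasDerivAt_cos t))
    have h2 : HasDerivAt (fun t : ℝ => 3 * Real.sin t) (3 * Real.cos t) t := by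
      simpa using (Real.hasDerivAt_sin t).const_mul 3
    have := h1.sub h2
    exact this.congr_deriv (by ring)
  have hmono : StrictMonoOn g (Set.Icc 0 (π / 2)) := by
    apply strictMonoOn_of_deriv_pos (convex_Icc 0 (π / 2))
    · exact Continuous.continuousOn (by continuity)
    · intro s hs
      rw [interior_Icc] at hs
      rw [(hderiv s).deriv]
      -- show 0 < 2 - 2 cos s - s sin s via half angle
      set u := s / 2 with hu
      have hu0 : 0 < u := by rw [hu]; linarith [hs.1]
      have hu2 : u < π / 2 := by
        have := hs.2
        rw [hu]; linarith [pi_pos]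
      have hsin : 0 < Real.sin u := Real.sin_pos_of_pos_of_lt_pi hu0 (by linarith [pi_pos])
      have hkey := sin_lt_aux' hu0 hu2
      have hcs : Real.cos s = 2 * Real.cos u ^ 2 - 1 := by
        rw [show s = 2 * u by rw [hu]; ring, Real.cos_two_mul]
      have hss : Real.sin s = 2 * Real.sin u * Real.cos u := by
        rw [show s = 2 * u by rw [hu]; ring, Real.sin_two_mul]
      have hpyth : Real.sin u ^ 2 + Real.cos u ^ 2 = 1 := Real.sin_sq_add_cos_sq u
      have hs2 : s = 2 * u := by rw [hu]; ring
      rw [hcs, hss, hs2]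
      nlinarith [hsin, hkey, sq_nonneg (Real.sin u - Real.cos u)]
  have h := hmono (Set.left_mem_Icc.2 (by positivity)) ⟨le_of_lt h0, le_of_lt h2⟩ h0
  simp only [hg] at h
  simp at h
  linarith

theorem stmt_0 (x : ℝ) (hx : 0 < x) (hx1 : x < 1) :
    Real.arcsin x > 6 * (Real.sqrt (1 + x) - Real.sqrt (1 - x)) /
      (4 + Real.sqrt (1 + x) + Real.sqrt (1 - x)) := by
  set θ := Real.arcsin x with hθ
  have hθ0 : 0 < θ := Real.arcsin_pos.2 hx
  have hθ2 : θ < π / 2 := Real.arcsin_lt_pi_div_two.2 hx1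
  set u := θ / 2 with hu
  have hu0 : 0 < u := by rw [hu]; linarith [hθ0]
  have hu4 : u < π / 4 := by rw [hu]; linarith
  have hpi : 0 < π := pi_pos
  have hsin : 0 < Real.sin u := Real.sin_pos_of_pos_of_lt_pi hu0 (by linarith)
  have hcos : 0 < Real.cos u := Real.cos_pos_of_mem_Ioo ⟨by linarith, by linarith⟩
  have hsc : Real.sin u < Real.cos u := by
    rw [← Real.cos_pi_div_two_sub u]
    apply Real.cos_lt_cos_of_nonneg_of_le_pi (le_of_lt hu0) (by linarith) (by linarith)
  have hxθ : Real.sin θ = x := Real.sin_arcsin (by linarith) (le_of_lt hx1)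
  have hsθ : x = 2 * Real.sin u * Real.cos u := by
    rw [← hxθ, show θ = 2 * u by rw [hu]; ring, Real.sin_two_mul]
  have hpyth : Real.sin u ^ 2 + Real.cos u ^ 2 = 1 := Real.sin_sq_add_cos_sq u
  have ha : Real.sqrt (1 + x) = Real.cos u + Real.sin u := by
    rw [show 1 + x = (Real.cos u + Real.sin u) ^ 2 by nlinarith]
    exact Real.sqrt_sq (by linarith)
  have hb : Real.sqrt (1 - x) = Real.cos u - Real.sin u := by
    rw [show 1 - x = (Real.cos u - Real.sin u) ^ 2 by nlinarith]
    exact Real.sqrt_sq (by linarith)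
  rw [ha, hb]
  have hden : 0 < 4 + (Real.cos u + Real.sin u) + (Real.cos u - Real.sin u) := by linarith
  rw [gt_iff_lt, div_lt_iff₀ hden]
  have hc := cusa hu0 (by linarith)
  have hθu : θ = 2 * u := by rw [hu]; ring
  rw [hθu]
  nlinarith [hc]
end

section
/- For all x with 0 < x < 1, 6(√(1+x) − √(1−x)) / (4 + √(1+x) + √(1−x)) > 3x / (2 + √(1−x²)). -/
theorem stmt_1 (x : ℝ) (hx : 0 < x) (hx1 : x < 1) :
    6 * (Real.sqrt (1 + x) - Real.sqrt (1 - x)) /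
      (4 + Real.sqrt (1 + x) + Real.sqrt (1 - x)) >
    3 * x / (2 + Real.sqrt (1 - x ^ 2)) := by
  have h1 : (0:ℝ) < 1 + x := by linarith
  have h2 : (0:ℝ) < 1 - x := by linarith
  set a := Real.sqrt (1 + x) with ha'
  set b := Real.sqrt (1 - x) with hb'
  have ha : a ^ 2 = 1 + x := Real.sq_sqrt h1.le
  have hb : b ^ 2 = 1 - x := Real.sq_sqrt h2.le
  have hapos : 0 < a := Real.sqrt_pos.mpr h1
  have hbpos : 0 < b := Real.sqrt_pos.mpr h2
  have hab : Real.sqrt (1 - x ^ 2) = a * b := by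
    rw [show (1 - x ^ 2) = (1 + x) * (1 - x) by ring, ha', hb', Real.sqrt_mul h1.le]
  have hab2 : b < a := by
    apply Real.sqrt_lt_sqrt h2.le; linarith
  have hsum : a ^ 2 + b ^ 2 = 2 := by linarith
  have habl : a * b < 1 := by nlinarith [mul_pos hapos hbpos]
  have hs : a + b < 2 := by nlinarith
  have hx2 : x = (a ^ 2 - b ^ 2) / 2 := by linarith
  have hpos : 0 < (a - b) * (2 - (a + b)) ^ 2 :=
    mul_pos (by linarith) (pow_pos (by linarith) 2)
  have key : 6 * (a - b) * (2 + a * b) - 3 * ((a ^ 2 - b ^ 2) / 2) * (4 + a + b) =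
      (3 / 2) * ((a - b) * (2 - (a + b)) ^ 2) + 3 * (a - b) * (2 - (a ^ 2 + b ^ 2)) := by
    ring
  rw [hab, gt_iff_lt, div_lt_div_iff₀ (by positivity) (by positivity), hx2]
  nlinarith [hpos, key]
end

section
/- For all x with 0 ≤ x ≤ 1, 3x / (2 + √(1−x²)) ≤ arcsin x ≤ πx / (2 + √(1−x²)). -/
open Real Set

private lemma aux1 : ∀ θ ∈ Set.Icc (0:ℝ) (π/2), θ * Real.cos θ ≤ Real.sin θ := by
  intro θ hθ
  have hmono : MonotoneOn (fun t => Real.sin t - t * Real.cos t) (Set.Icc (0:ℝ) (π/2)) := by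
    apply monotoneOn_of_deriv_nonneg (convex_Icc _ _)
    · fun_prop
    · intro x hx
      exact ((Real.differentiable_sin x).sub
        ((differentiable_id.mul Real.differentiable_cos) x)).differentiableWithinAt
    · intro x hx
      rw [interior_Icc, Set.mem_Ioo] at hx
      have hd : HasDerivAt (fun t => Real.sin t - t * Real.cos t) (x * Real.sin x) x := by
        have := (Real.hasDerivAt_sin x).sub ((hasDerivAt_id x).mul (Real.hasDerivAt_cos x))
        exact this.congr_deriv (by simp only [id_eq]; ring)
      rw [hd.deriv]
      have : 0 ≤ Real.sin x := Real.sin_nonneg_of_nonneg_of_le_pi hx.1.le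
        (hx.2.le.trans (by linarith [Real.pi_pos]))
      exact mul_nonneg hx.1.le this
  have h0 : (0:ℝ) ∈ Set.Icc (0:ℝ) (π/2) := by
    constructor <;> [rfl; positivity]
  have := hmono h0 hθ hθ.1
  simp at this
  linarith

private lemma aux2 : ∀ θ ∈ Set.Icc (0:ℝ) (π/2), 3 * Real.sin θ ≤ θ * (2 + Real.cos θ) := by
  have h0 : (0:ℝ) ∈ Set.Icc (0:ℝ) (π/2) := ⟨le_refl _, by positivity⟩
  -- f' θ = 2 - 2 cos θ - θ sin θ is nonneg on Icc
  have hf'mono : MonotoneOn (fun t => 2 - 2 * Real.cos t - t * Real.sin t)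
      (Set.Icc (0:ℝ) (π/2)) := by
    apply monotoneOn_of_deriv_nonneg (convex_Icc _ _)
    · fun_prop
    · intro x hx
      exact (((differentiable_const _).sub
        ((differentiable_const _).mul Real.differentiable_cos)).sub
        (differentiable_id.mul Real.differentiable_sin) x).differentiableWithinAt
    · intro x hx
      rw [interior_Icc] at hx
      have hd : HasDerivAt (fun t => 2 - 2 * Real.cos t - t * Real.sin t)
          (Real.sin x - x * Real.cos x) x := by
        have := (((hasDerivAt_const x (2:ℝ)).sub
          ((hasDerivAt_const x (2:ℝ)).mul (Real.hasDerivAt_cos x))).sub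
          ((hasDerivAt_id x).mul (Real.hasDerivAt_sin x)))
        exact this.congr_deriv (by simp only [id_eq]; ring)
      rw [hd.deriv]
      have := aux1 x (Set.mem_Icc_of_Ioo hx)
      linarith
  have hf' : ∀ x ∈ Set.Icc (0:ℝ) (π/2), 0 ≤ 2 - 2 * Real.cos x - x * Real.sin x := by
    intro x hx
    have := hf'mono h0 hx hx.1
    simp [Real.cos_zero] at this
    linarith
  have hfmono : MonotoneOn (fun t => t * (2 + Real.cos t) - 3 * Real.sin t)
      (Set.Icc (0:ℝ) (π/2)) := by
    apply monotoneOn_of_deriv_nonneg (convex_Icc _ _)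
    · fun_prop
    · intro x hx
      exact ((differentiable_id.mul ((differentiable_const _).add Real.differentiable_cos)).sub
        ((differentiable_const _).mul Real.differentiable_sin) x).differentiableWithinAt
    · intro x hx
      rw [interior_Icc] at hx
      have hd : HasDerivAt (fun t => t * (2 + Real.cos t) - 3 * Real.sin t)
          (2 - 2 * Real.cos x - x * Real.sin x) x := by
        have := ((hasDerivAt_id x).mul
          ((hasDerivAt_const x (2:ℝ)).add (Real.hasDerivAt_cos x))).sub
          ((hasDerivAt_const x (3:ℝ)).mul (Real.hasDerivAt_sin x))
        exact this.congr_deriv (by simp only [id_eq, Pi.add_apply]; ring)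
      rw [hd.deriv]
      exact hf' x (Set.mem_Icc_of_Ioo hx)
  intro θ hθ
  have := hfmono h0 hθ hθ.1
  simp [Real.cos_zero] at this
  linarith

private lemma aux3 : ∀ θ ∈ Set.Icc (0:ℝ) (π/2), θ * (2 + Real.cos θ) ≤ π * Real.sin θ := by
  have hπ := Real.pi_gt_three
  have hconc : ConcaveOn ℝ (Set.Icc (0:ℝ) (π/2))
      (fun t => π * Real.sin t - t * (2 + Real.cos t)) := by
    apply concaveOn_of_hasDerivWithinAt2_nonpos (convex_Icc _ _)
      (f' := fun t => π * Real.cos t - (2 + Real.cos t) + t * Real.sin t)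
      (f'' := fun t => (2 - π) * Real.sin t + t * Real.cos t)
    · fun_prop
    · intro x hx
      have : HasDerivAt (fun t => π * Real.sin t - t * (2 + Real.cos t))
          (π * Real.cos x - (2 + Real.cos x) + x * Real.sin x) x := by
        have := ((hasDerivAt_const x π).mul (Real.hasDerivAt_sin x)).sub
          ((hasDerivAt_id x).mul ((hasDerivAt_const x (2:ℝ)).add (Real.hasDerivAt_cos x)))
        exact this.congr_deriv (by simp only [id_eq, Pi.add_apply]; ring)
      exact this.hasDerivWithinAt
    · intro x hx
      have : HasDerivAt (fun t => π * Real.cos t - (2 + Real.cos t) + t * Real.sin t)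
          ((2 - π) * Real.sin x + x * Real.cos x) x := by
        have := (((hasDerivAt_const x π).mul (Real.hasDerivAt_cos x)).sub
          ((hasDerivAt_const x (2:ℝ)).add (Real.hasDerivAt_cos x))).add
          ((hasDerivAt_id x).mul (Real.hasDerivAt_sin x))
        exact this.congr_deriv (by simp only [id_eq]; ring)
      exact this.hasDerivWithinAt
    · intro x hx
      rw [interior_Icc] at hx
      have h1 := aux1 x (Set.mem_Icc_of_Ioo hx)
      have h2 : 0 ≤ Real.sin x := Real.sin_nonneg_of_nonneg_of_le_pi hx.1.le
        (hx.2.le.trans (by linarith))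
      nlinarith
  intro θ hθ
  have hπ2 : (0:ℝ) < π/2 := by positivity
  obtain ⟨h0θ, hθ2⟩ := hθ
  set t : ℝ := θ / (π/2) with ht
  have ht0 : 0 ≤ t := by positivity
  have ht1 : t ≤ 1 := by rw [ht, div_le_one hπ2]; exact hθ2
  have hmem0 : (0:ℝ) ∈ Set.Icc (0:ℝ) (π/2) := ⟨le_refl _, hπ2.le⟩
  have hmem1 : (π/2) ∈ Set.Icc (0:ℝ) (π/2) := ⟨hπ2.le, le_refl _⟩
  have hab : (1 - t) + t = 1 := by ring
  have key := hconc.2 hmem0 hmem1 (by linarith : (0:ℝ) ≤ 1 - t) ht0 hab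
  have hcomb : (1 - t) • (0:ℝ) + t • (π/2) = θ := by
    simp [smul_eq_mul, ht]
  rw [hcomb] at key
  simp [Real.sin_pi_div_two, Real.cos_pi_div_two, smul_eq_mul] at key
  nlinarith [key]

theorem stmt_2 (x : ℝ) (hx : 0 ≤ x) (hx1 : x ≤ 1) :
    3 * x / (2 + Real.sqrt (1 - x ^ 2)) ≤ Real.arcsin x ∧
    Real.arcsin x ≤ Real.pi * x / (2 + Real.sqrt (1 - x ^ 2)) := by
  set θ := Real.arcsin x with hθ
  have hθ0 : 0 ≤ θ := Real.arcsin_nonneg.2 hx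
  have hθ2 : θ ≤ π/2 := Real.arcsin_le_pi_div_two x
  have hsin : Real.sin θ = x := Real.sin_arcsin (by linarith) hx1
  have hcos : Real.sqrt (1 - x ^ 2) = Real.cos θ := by
    rw [hθ, Real.cos_arcsin]
  have hd : 0 < 2 + Real.sqrt (1 - x ^ 2) := by positivity
  have hmem : θ ∈ Set.Icc (0:ℝ) (π/2) := ⟨hθ0, hθ2⟩
  constructor
  · rw [div_le_iff₀ hd, hcos]
    have := aux2 θ hmem
    rw [hsin] at this
    linarith
  · rw [le_div_iff₀ hd, hcos]
    have := aux3 θ hmem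
    rw [hsin] at this
    linarith
end

section
/- For all x with 0 ≤ x ≤ 1, arcsin x ≤ (πx/(π−2)) / (2/(π−2) + √(1−x²)). -/
open Real

noncomputable def mF (t : ℝ) : ℝ := π * Real.sin t - 2*t - (π-2)*t*Real.cos t
noncomputable def mF1 (t : ℝ) : ℝ := 2*Real.cos t - 2 + (π-2)*t*Real.sin t
noncomputable def mG (t : ℝ) : ℝ := (π-4)*Real.tan t + (π-2)*t
noncomputable def mG1 (t : ℝ) : ℝ := (π-4)/(Real.cos t)^2 + (π-2)

lemma hasDerivAt_mF (t : ℝ) : HasDerivAt mF (mF1 t) t := by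
  have h1 : HasDerivAt (fun s : ℝ => π * Real.sin s) (π * Real.cos t) t :=
    (Real.hasDerivAt_sin t).const_mul π
  have h2 : HasDerivAt (fun s : ℝ => 2*s) 2 t := (hasDerivAt_id t).const_mul 2 |>.congr_deriv (by ring)
  have h3 : HasDerivAt (fun s : ℝ => (π-2)*s*Real.cos s)
      ((π-2)*(1*Real.cos t + t*(-Real.sin t))) t := by
    have := ((hasDerivAt_id t).mul (Real.hasDerivAt_cos t)).const_mul (π-2)
    simpa [mul_assoc] using this
  have := (h1.sub h2).sub h3
  unfold mF
  exact this.congr_deriv (by unfold mF1; ring)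

lemma hasDerivAt_mF1 (t : ℝ) :
    HasDerivAt mF1 ((π-4)*Real.sin t + (π-2)*t*Real.cos t) t := by
  have h1 : HasDerivAt (fun s : ℝ => 2*Real.cos s) (2*(-Real.sin t)) t :=
    (Real.hasDerivAt_cos t).const_mul 2
  have h3 : HasDerivAt (fun s : ℝ => (π-2)*s*Real.sin s)
      ((π-2)*(1*Real.sin t + t*(Real.cos t))) t := by
    have := ((hasDerivAt_id t).mul (Real.hasDerivAt_sin t)).const_mul (π-2)
    simpa [mul_assoc] using this
  have := (h1.sub (hasDerivAt_const t 2)).add h3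
  unfold mF1
  exact this.congr_deriv (by ring)

lemma hasDerivAt_mG (t : ℝ) (h : Real.cos t ≠ 0) : HasDerivAt mG (mG1 t) t := by
  have h1 : HasDerivAt (fun s : ℝ => (π-4)*Real.tan s) ((π-4)*(1/Real.cos t^2)) t :=
    (Real.hasDerivAt_tan h).const_mul (π-4)
  have h2 : HasDerivAt (fun s : ℝ => (π-2)*s) (π-2) t :=
    (hasDerivAt_id t).const_mul (π-2) |>.congr_deriv (by ring)
  have := h1.add h2
  exact this.congr_deriv (by unfold mG1; ring)

lemma cos_pos_of_lt (t : ℝ) (h0 : 0 ≤ t) (h2 : t < π/2) : 0 < Real.cos t :=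
  Real.cos_pos_of_mem_Ioo ⟨by linarith [Real.pi_pos], h2⟩

lemma mG1_anti (a b : ℝ) (ha : 0 ≤ a) (hab : a ≤ b) (hb : b < π/2) : mG1 b ≤ mG1 a := by
  have hcb : 0 < Real.cos b := cos_pos_of_lt b (le_trans ha hab) hb
  have hca : Real.cos b ≤ Real.cos a :=
    Real.cos_le_cos_of_nonneg_of_le_pi ha (by linarith [Real.pi_pos]) hab
  have hπ : π < 4 := by linarith [Real.pi_lt_d2]
  unfold mG1
  have h1 : Real.cos b ^ 2 ≤ Real.cos a ^ 2 := by nlinarith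
  have h2 : (0:ℝ) < Real.cos b ^ 2 := by positivity
  have h3 : (0:ℝ) < Real.cos a ^ 2 := by nlinarith
  have := div_le_div_of_nonneg_left (c := Real.cos b ^ 2) (b := Real.cos a ^ 2)
    (a := 4 - π) (by linarith) h2 h1
  have h4 : (π-4)/Real.cos b ^ 2 ≤ (π-4)/Real.cos a ^ 2 := by
    rw [div_le_div_iff₀ h2 h3]; nlinarith
  linarith

lemma mG_contOn (b : ℝ) (hb : b < π/2) : ContinuousOn mG (Set.Icc 0 b) := by
  intro x hx
  exact (hasDerivAt_mG x (ne_of_gt (cos_pos_of_lt x hx.1 (lt_of_le_of_lt hx.2 hb)))).continuousAt.continuousWithinAt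

lemma mG_zero : mG 0 = 0 := by simp [mG]

lemma mG_nonpos (a b : ℝ) (ha : 0 < a) (hab : a ≤ b) (hb : b < π/2)
    (hga : mG a ≤ 0) : mG b ≤ 0 := by
  obtain ⟨η, hη, hηd⟩ := exists_hasDerivAt_eq_slope mG mG1 ha
    (mG_contOn a (lt_of_le_of_lt hab hb))
    (fun x hx => hasDerivAt_mG x (ne_of_gt (cos_pos_of_lt x (le_of_lt hx.1)
      (lt_of_lt_of_le hx.2 (le_trans hab (le_of_lt hb))))))
  have hη0 : mG1 η ≤ 0 := by
    rw [hηd, mG_zero]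
    apply div_nonpos_of_nonpos_of_nonneg <;> linarith
  rcases eq_or_lt_of_le hab with rfl | hab'
  · exact hga
  obtain ⟨ξ, hξ, hξd⟩ := exists_hasDerivAt_eq_slope mG mG1 hab'
    (ContinuousOn.mono (mG_contOn b hb) (by
      intro x hx; exact ⟨le_trans (le_of_lt ha) hx.1, hx.2⟩))
    (fun x hx => hasDerivAt_mG x (ne_of_gt (cos_pos_of_lt x
      (le_trans (le_of_lt ha) (le_of_lt hx.1)) (lt_trans hx.2 hb))))
  have hξ0 : mG1 ξ ≤ 0 :=
    le_trans (mG1_anti η ξ (le_of_lt hη.1) (le_trans (le_of_lt hη.2) (le_of_lt hξ.1))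
      (lt_trans hξ.2 hb)) hη0
  rw [hξd] at hξ0
  have hba : 0 < b - a := by linarith
  rcases div_nonpos_iff.mp hξ0 with ⟨h', h''⟩ | ⟨h', h''⟩ <;> linarith

lemma mF1_deriv_eq (t : ℝ) (h : Real.cos t ≠ 0) :
    (π-4)*Real.sin t + (π-2)*t*Real.cos t = Real.cos t * mG t := by
  unfold mG
  rw [Real.tan_eq_sin_div_cos]
  field_simp

lemma mF1_zero : mF1 0 = 0 := by simp [mF1]

lemma mF1_nonpos (t1 t2 : ℝ) (h1 : 0 < t1) (h12 : t1 ≤ t2) (h2 : t2 ≤ π/2)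
    (hf : mF1 t1 ≤ 0) : mF1 t2 ≤ 0 := by
  rcases eq_or_lt_of_le h2 with rfl | h2'
  · -- t2 = π/2
    unfold mF1
    rw [Real.cos_pi_div_two, Real.sin_pi_div_two]
    nlinarith [Real.pi_lt_d2, Real.pi_gt_three]
  -- t2 < π/2
  obtain ⟨η, hη, hηd⟩ := exists_hasDerivAt_eq_slope mF1
    (fun t => (π-4)*Real.sin t + (π-2)*t*Real.cos t) h1
    (fun x _ => (hasDerivAt_mF1 x).continuousAt.continuousWithinAt)
    (fun x _ => hasDerivAt_mF1 x)
  have hηπ : η < π/2 := lt_of_lt_of_le hη.2 (le_trans h12 h2)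
  have hcη : 0 < Real.cos η := cos_pos_of_lt η (le_of_lt hη.1) hηπ
  have hGη : mG η ≤ 0 := by
    have : Real.cos η * mG η ≤ 0 := by
      rw [← mF1_deriv_eq η (ne_of_gt hcη), hηd, mF1_zero]
      apply div_nonpos_of_nonpos_of_nonneg <;> linarith
    nlinarith
  rcases eq_or_lt_of_le h12 with rfl | h12'
  · exact hf
  obtain ⟨ξ, hξ, hξd⟩ := exists_hasDerivAt_eq_slope mF1
    (fun t => (π-4)*Real.sin t + (π-2)*t*Real.cos t) h12'
    (fun x _ => (hasDerivAt_mF1 x).continuousAt.continuousWithinAt)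
    (fun x _ => hasDerivAt_mF1 x)
  have hξπ : ξ < π/2 := lt_of_lt_of_le hξ.2 h2
  have hcξ : 0 < Real.cos ξ := cos_pos_of_lt ξ (le_trans (le_of_lt h1) (le_of_lt hξ.1)) hξπ
  have hGξ : mG ξ ≤ 0 := mG_nonpos η ξ hη.1
    (le_trans (le_of_lt hη.2) (le_of_lt hξ.1)) hξπ hGη
  have hd : (π-4)*Real.sin ξ + (π-2)*ξ*Real.cos ξ ≤ 0 := by
    rw [mF1_deriv_eq ξ (ne_of_gt hcξ)]; nlinarith
  rw [hξd] at hd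
  have h21 : 0 < t2 - t1 := by linarith
  rcases div_nonpos_iff.mp hd with ⟨h', h''⟩ | ⟨h', h''⟩ <;> linarith

lemma mF_zero : mF 0 = 0 := by simp [mF]

lemma mF_pi_div_two : mF (π/2) = 0 := by
  unfold mF
  rw [Real.cos_pi_div_two, Real.sin_pi_div_two]
  ring

lemma mF_nonneg (t : ℝ) (h0 : 0 ≤ t) (h2 : t ≤ π/2) : 0 ≤ mF t := by
  rcases eq_or_lt_of_le h0 with rfl | h0'
  · rw [mF_zero]
  by_cases hcase : ∃ s, 0 < s ∧ s < t ∧ mF1 s ≤ 0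
  · obtain ⟨s, hs0, hst, hfs⟩ := hcase
    rcases eq_or_lt_of_le h2 with rfl | h2'
    · rw [mF_pi_div_two]
    obtain ⟨ξ, hξ, hξd⟩ := exists_hasDerivAt_eq_slope mF mF1 h2'
      (fun x _ => (hasDerivAt_mF x).continuousAt.continuousWithinAt)
      (fun x _ => hasDerivAt_mF x)
    have hξ0 : mF1 ξ ≤ 0 := mF1_nonpos s ξ hs0
      (le_trans (le_of_lt hst) (le_of_lt hξ.1)) (le_of_lt hξ.2) hfs
    rw [hξd, mF_pi_div_two] at hξ0
    have hden : 0 < π/2 - t := by linarith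
    rcases div_nonpos_iff.mp hξ0 with ⟨h', h''⟩ | ⟨h', h''⟩ <;> linarith
  · push_neg at hcase
    obtain ⟨ξ, hξ, hξd⟩ := exists_hasDerivAt_eq_slope mF mF1 h0'
      (fun x _ => (hasDerivAt_mF x).continuousAt.continuousWithinAt)
      (fun x _ => hasDerivAt_mF x)
    have hξ0 : 0 ≤ mF1 ξ := le_of_lt (hcase ξ hξ.1 hξ.2)
    rw [hξd, mF_zero] at hξ0
    have := div_nonneg_iff.mp hξ0
    rcases this with ⟨h, _⟩ | ⟨_, h⟩
    · linarith
    · linarith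

theorem stmt_3 (x : ℝ) (hx : 0 ≤ x) (hx1 : x ≤ 1) :
    Real.arcsin x ≤ (Real.pi * x / (Real.pi - 2)) /
      (2 / (Real.pi - 2) + Real.sqrt (1 - x ^ 2)) := by
  set t := Real.arcsin x with ht
  have hπ2 : (2:ℝ) < π := by linarith [Real.pi_gt_three]
  have hsin : Real.sin t = x := Real.sin_arcsin (by linarith) hx1
  have hcos : Real.cos t = Real.sqrt (1 - x ^ 2) := Real.cos_arcsin x
  have ht0 : 0 ≤ t := Real.arcsin_nonneg.mpr hx
  have ht2 : t ≤ π/2 := Real.arcsin_le_pi_div_two x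
  have key : 0 ≤ π * x - 2*t - (π-2)*t*Real.sqrt (1 - x ^ 2) := by
    have := mF_nonneg t ht0 ht2
    unfold mF at this
    rw [hsin, hcos] at this
    linarith
  set s := Real.sqrt (1 - x ^ 2) with hs
  have hs0 : 0 ≤ s := Real.sqrt_nonneg _
  have hne : π - 2 ≠ 0 := by linarith
  have hrw : (π * x / (π - 2)) / (2 / (π - 2) + s) = π * x / (2 + (π-2)*s) := by
    rw [div_add' _ _ _ hne, div_div_div_cancel_right₀]
    · ring
    · exact hne
  have hpos : 0 < 2 + (π-2)*s := by nlinarith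
  rw [hrw, le_div_iff₀ hpos]
  nlinarith
end

section
/- For all x with 0 ≤ x ≤ 1, π(4−π)x / (2/(π−2) + √(1−x²)) ≤ arcsin x. -/
open Real

private lemma nonneg_of_deriv (f f' : ℝ → ℝ) (hf : ∀ t : ℝ, HasDerivAt f (f' t) t)
    (h0 : f 0 = 0) (hd : ∀ t : ℝ, 0 ≤ t → 0 ≤ f' t) {x : ℝ} (hx : 0 ≤ x) : 0 ≤ f x := by
  have hmono : MonotoneOn f (Set.Ici 0) := by
    apply monotoneOn_of_deriv_nonneg (convex_Ici 0)
    · exact fun t _ => (hf t).continuousAt.continuousWithinAt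
    · exact fun t _ => ((hf t).differentiableAt).differentiableWithinAt
    · intro t ht
      rw [interior_Ici] at ht
      rw [(hf t).deriv]
      exact hd t (le_of_lt ht)
  have := hmono Set.self_mem_Ici hx hx
  simpa [h0] using this

private lemma sin_ge_cubic {x : ℝ} (hx : 0 ≤ x) : x - x ^ 3 / 6 ≤ Real.sin x := by
  have h := nonneg_of_deriv (fun t => Real.sin t - (t - t ^ 3 / 6))
      (fun t => Real.cos t - (1 - t ^ 2 / 2))
      (fun t => by
        have h1 := Real.hasDerivAt_sin t
        have h2 : HasDerivAt (fun t : ℝ => t - t ^ 3 / 6) (1 - t ^ 2 / 2) t := by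
          have := (hasDerivAt_id t).sub ((hasDerivAt_pow 3 t).div_const 6)
          exact this.congr_deriv (by norm_num <;> ring)
        exact h1.sub h2)
      (by norm_num)
      (fun t _ => by
        have := Real.one_sub_sq_div_two_le_cos (x := t)
        linarith) hx
  simpa using h

private lemma cos_le_quartic {x : ℝ} (hx : 0 ≤ x) :
    Real.cos x ≤ 1 - x ^ 2 / 2 + x ^ 4 / 24 := by
  have h := nonneg_of_deriv (fun t => 1 - t ^ 2 / 2 + t ^ 4 / 24 - Real.cos t)
      (fun t => Real.sin t - (t - t ^ 3 / 6))
      (fun t => by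
        have h1 : HasDerivAt (fun t : ℝ => 1 - t ^ 2 / 2 + t ^ 4 / 24)
            (-(t) + t ^ 3 / 6) t := by
          have := (((hasDerivAt_const t (1 : ℝ)).sub
            ((hasDerivAt_pow 2 t).div_const 2)).add ((hasDerivAt_pow 4 t).div_const 24))
          exact this.congr_deriv (by norm_num <;> ring)
        have := h1.sub (Real.hasDerivAt_cos t)
        exact this.congr_deriv (by ring))
      (by norm_num)
      (fun t ht => by
        have := sin_ge_cubic ht
        linarith) hx
  simpa using h

private lemma sin_le_quintic {x : ℝ} (hx : 0 ≤ x) :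
    Real.sin x ≤ x - x ^ 3 / 6 + x ^ 5 / 120 := by
  have h := nonneg_of_deriv (fun t => t - t ^ 3 / 6 + t ^ 5 / 120 - Real.sin t)
      (fun t => 1 - t ^ 2 / 2 + t ^ 4 / 24 - Real.cos t)
      (fun t => by
        have h1 : HasDerivAt (fun t : ℝ => t - t ^ 3 / 6 + t ^ 5 / 120)
            (1 - t ^ 2 / 2 + t ^ 4 / 24) t := by
          have := ((hasDerivAt_id t).sub ((hasDerivAt_pow 3 t).div_const 6)).add
            ((hasDerivAt_pow 5 t).div_const 120)
          exact this.congr_deriv (by norm_num <;> ring)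
        exact h1.sub (Real.hasDerivAt_sin t))
      (by norm_num)
      (fun t ht => by
        have := cos_le_quartic ht
        linarith) hx
  linarith [h]

private lemma cos_ge_sextic {x : ℝ} (hx : 0 ≤ x) :
    1 - x ^ 2 / 2 + x ^ 4 / 24 - x ^ 6 / 720 ≤ Real.cos x := by
  have h := nonneg_of_deriv
      (fun t => Real.cos t - (1 - t ^ 2 / 2 + t ^ 4 / 24 - t ^ 6 / 720))
      (fun t => (t - t ^ 3 / 6 + t ^ 5 / 120) - Real.sin t)
      (fun t => by
        have h1 : HasDerivAt (fun t : ℝ => 1 - t ^ 2 / 2 + t ^ 4 / 24 - t ^ 6 / 720)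
            (-(t) + t ^ 3 / 6 - t ^ 5 / 120) t := by
          have := (((hasDerivAt_const t (1 : ℝ)).sub
            ((hasDerivAt_pow 2 t).div_const 2)).add
            ((hasDerivAt_pow 4 t).div_const 24)).sub ((hasDerivAt_pow 6 t).div_const 720)
          exact this.congr_deriv (by norm_num <;> ring)
        have := (Real.hasDerivAt_cos t).sub h1
        exact this.congr_deriv (by ring))
      (by norm_num)
      (fun t ht => by
        have := sin_le_quintic ht
        linarith) hx
  linarith [h]

private lemma cubic_pos {u : ℝ} (hu0 : 0 ≤ u) (hu : u ≤ 2.468) :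
    0 ≤ 1.75193 + 1 - 2.69678 + (2.69676 / 6 - 1 / 2) * u
      + (1 / 24 - 2.69678 / 120) * u ^ 2 - u ^ 3 / 720 := by
  nlinarith [sq_nonneg (u - 1.6), mul_nonneg hu0 (sq_nonneg (u - 1.6)),
    mul_nonneg (sub_nonneg.2 hu) (sq_nonneg (u - 1.6)), sq_nonneg u,
    mul_nonneg hu0 hu0]

private lemma key (θ : ℝ) (h0 : 0 ≤ θ) (h2 : θ ≤ π / 2) :
    π * (4 - π) * Real.sin θ ≤ θ * (2 / (π - 2) + Real.cos θ) := by
  have hπl : (3.141592 : ℝ) < π := Real.pi_gt_d6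
  have hπu : π < 3.141593 := Real.pi_lt_d6
  have hk_up : π * (4 - π) ≤ 2.69678 := by nlinarith
  have hk_lo : (2.69676 : ℝ) ≤ π * (4 - π) := by nlinarith
  have hk_pos : (0 : ℝ) < π * (4 - π) := by nlinarith
  have hc : (1.75193 : ℝ) ≤ 2 / (π - 2) := by
    rw [le_div_iff₀ (by linarith)]; nlinarith
  have hs := sin_le_quintic h0
  have hcs := cos_ge_sextic h0
  have hu : θ ^ 2 ≤ 2.468 := by nlinarith
  have hu0 : 0 ≤ θ ^ 2 := sq_nonneg θ
  have hcube := cubic_pos hu0 hu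
  have hsin_nonneg : 0 ≤ Real.sin θ := Real.sin_nonneg_of_nonneg_of_le_pi h0 (by linarith)
  -- π(4-π) sin θ ≤ π(4-π)(θ - θ³/6 + θ⁵/120)
  have h1 : π * (4 - π) * Real.sin θ ≤ π * (4 - π) * (θ - θ ^ 3 / 6 + θ ^ 5 / 120) :=
    mul_le_mul_of_nonneg_left hs hk_pos.le
  have h2' : θ * (2 / (π - 2) + (1 - θ ^ 2 / 2 + θ ^ 4 / 24 - θ ^ 6 / 720))
      ≤ θ * (2 / (π - 2) + Real.cos θ) := by
    apply mul_le_mul_of_nonneg_left _ h0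
    linarith
  refine h1.trans (le_trans ?_ h2')
  -- reduces to: 0 ≤ θ * (c + 1 - k + (k/6-1/2)θ² + (1/24-k/120)θ⁴ - θ⁶/720)
  have hbr : 0 ≤ 2 / (π - 2) + 1 - π * (4 - π) + (π * (4 - π) / 6 - 1 / 2) * θ ^ 2
      + (1 / 24 - π * (4 - π) / 120) * θ ^ 4 - θ ^ 6 / 720 := by
    have e1 : (π * (4 - π) / 6 - 1 / 2) * θ ^ 2 ≥ (2.69676 / 6 - 1 / 2) * θ ^ 2 := by
      apply mul_le_mul_of_nonneg_right _ hu0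
      linarith
    have e2 : (1 / 24 - π * (4 - π) / 120) * θ ^ 4 ≥ (1 / 24 - 2.69678 / 120) * θ ^ 4 := by
      apply mul_le_mul_of_nonneg_right _ (by positivity)
      linarith
    have e3 : (1 / 24 - 2.69678 / 120) * θ ^ 4 ≥ (1 / 24 - 2.69678 / 120) * (θ ^ 2) ^ 2 := by
      apply le_of_eq; ring
    nlinarith [hcube]
  nlinarith [mul_nonneg h0 hbr]

theorem stmt_4 (x : ℝ) (hx : 0 ≤ x) (hx1 : x ≤ 1) :
    Real.pi * (4 - Real.pi) * x / (2 / (Real.pi - 2) + Real.sqrt (1 - x ^ 2)) ≤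
      Real.arcsin x := by
  have hπl : (3.141592 : ℝ) < π := Real.pi_gt_d6
  have hden : 0 < 2 / (π - 2) + Real.sqrt (1 - x ^ 2) := by
    have : (0 : ℝ) < 2 / (π - 2) := div_pos two_pos (by linarith)
    have := Real.sqrt_nonneg (1 - x ^ 2)
    linarith
  rw [div_le_iff₀ hden]
  set θ := Real.arcsin x with hθ
  have h0 : 0 ≤ θ := Real.arcsin_nonneg.2 hx
  have h2 : θ ≤ π / 2 := Real.arcsin_le_pi_div_two x
  have hsin : Real.sin θ = x := Real.sin_arcsin (by linarith) hx1
  have hcos : Real.cos θ = Real.sqrt (1 - x ^ 2) := Real.cos_arcsin x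
  have := key θ h0 h2
  rw [hsin, hcos] at this
  linarith
end

section
/- For all x with 0 ≤ x ≤ 1, (π/2)x / (1 + √(1−x²)) ≤ arcsin x. -/
open Real Set

lemma tan_convex_aux : ConvexOn ℝ (Icc 0 (π/4)) Real.tan := by
  have hsub : Icc (0:ℝ) (π/4) ⊆ Ioo (-(π/2)) (π/2) := by
    intro y hy
    have hπ := Real.pi_pos
    exact ⟨by simp only [mem_Icc] at hy; linarith [hy.1], by simp only [mem_Icc] at hy; linarith [hy.2]⟩
  have hcos : ∀ y ∈ Icc (0:ℝ) (π/4), 0 < Real.cos y := fun y hy =>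
    Real.cos_pos_of_mem_Ioo (hsub hy)
  apply MonotoneOn.convexOn_of_deriv (convex_Icc _ _)
  · intro y hy
    exact (Real.continuousAt_tan.2 (hcos y hy).ne').continuousWithinAt
  · intro y hy
    rw [interior_Icc] at hy
    exact (Real.differentiableAt_tan.2 (hcos y (Ioo_subset_Icc_self hy)).ne').differentiableWithinAt
  · rw [interior_Icc]
    intro a ha b hb hab
    rw [Real.deriv_tan, Real.deriv_tan]
    have hca : 0 < Real.cos a := hcos a (Ioo_subset_Icc_self ha)
    have hcb : 0 < Real.cos b := hcos b (Ioo_subset_Icc_self hb)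
    have : Real.cos b ≤ Real.cos a := by
      apply Real.cos_le_cos_of_nonneg_of_le_pi ha.1.le _ hab
      have hπ := Real.pi_pos; linarith [hb.2]
    have h2 : Real.cos b ^ 2 ≤ Real.cos a ^ 2 := by nlinarith
    apply div_le_div_of_nonneg_left one_pos.le (by positivity) h2

lemma tan_le_aux {t : ℝ} (h0 : 0 ≤ t) (h1 : t ≤ π/4) : Real.tan t ≤ 4 / π * t := by
  have hπ := Real.pi_pos
  set μ : ℝ := 4 / π * t with hμ
  have hμ0 : 0 ≤ μ := by positivity
  have hμ1 : μ ≤ 1 := by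
    rw [hμ, div_mul_eq_mul_div, div_le_one hπ]; linarith
  have key := tan_convex_aux.2 (x := 0) (y := π/4) (mem_Icc.2 ⟨le_refl 0, by positivity⟩)
    (mem_Icc.2 ⟨by positivity, le_refl (π/4)⟩) (sub_nonneg.2 hμ1) hμ0 (by ring)
  have ht : (1 - μ) • (0:ℝ) + μ • (π/4) = t := by
    simp only [smul_eq_mul, mul_zero, zero_add, hμ]
    field_simp
  rw [ht] at key
  simpa [Real.tan_pi_div_four, smul_eq_mul, hμ] using key

theorem stmt_5 (x : ℝ) (hx : 0 ≤ x) (hx1 : x ≤ 1) :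
    (Real.pi / 2) * x / (1 + Real.sqrt (1 - x ^ 2)) ≤ Real.arcsin x := by
  have hπ := Real.pi_pos
  set θ := Real.arcsin x with hθ
  have hθ0 : 0 ≤ θ := Real.arcsin_nonneg.2 hx
  have hθ2 : θ ≤ π / 2 := Real.arcsin_le_pi_div_two x
  have hsin : Real.sin θ = x := Real.sin_arcsin (by linarith) hx1
  have hcos : Real.cos θ = Real.sqrt (1 - x ^ 2) := by
    rw [hθ, Real.cos_arcsin]
  have hcosnn : 0 ≤ Real.cos θ := Real.cos_arcsin_nonneg x
  rw [← hcos, ← hsin]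
  have hden : 0 < 1 + Real.cos θ := by linarith
  rw [div_le_iff₀ hden]
  -- half angle
  have hs2 : Real.sin θ = 2 * Real.sin (θ/2) * Real.cos (θ/2) := by
    rw [← Real.sin_two_mul]; ring_nf
  have hc2 : 1 + Real.cos θ = 2 * Real.cos (θ/2) ^ 2 := by
    have h := Real.cos_sq (θ/2)
    rw [show 2*(θ/2) = θ by ring] at h
    linarith
  have hhalf0 : 0 ≤ θ / 2 := by linarith
  have hhalf1 : θ / 2 ≤ π / 4 := by linarith
  have hcoshalf : 0 < Real.cos (θ/2) := by
    apply Real.cos_pos_of_mem_Ioo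
    constructor <;> [linarith; linarith]
  have htan := tan_le_aux hhalf0 hhalf1
  rw [Real.tan_eq_sin_div_cos, div_le_iff₀ hcoshalf] at htan
  have : Real.sin (θ/2) ≤ 4 / π * (θ/2) * Real.cos (θ/2) := htan
  calc π / 2 * Real.sin θ = π * Real.sin (θ/2) * Real.cos (θ/2) := by rw [hs2]; ring
    _ ≤ π * (4 / π * (θ/2) * Real.cos (θ/2)) * Real.cos (θ/2) := by
        apply mul_le_mul_of_nonneg_right _ hcoshalf.le
        exact mul_le_mul_of_nonneg_left this hπ.le
    _ = θ * (2 * Real.cos (θ/2) ^ 2) := by field_simp; ring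
    _ = θ * (1 + Real.cos θ) := by rw [hc2]
end

section
/- For every real α ≥ 2, the function f_α(x) = (α + √(1−x²)) · (arcsin x)/x is strictly increasing on (0, 1]. -/
open Real Set

lemma key_ineq (θ : ℝ) (h0 : 0 < θ) (h1 : θ ≤ π / 2) :
    θ * (1 + 2 * Real.cos θ) < Real.sin θ * (2 + Real.cos θ) := by
  have hderiv : ∀ t : ℝ, HasDerivAt
      (fun t => Real.sin t * (2 + Real.cos t) - t * (1 + 2 * Real.cos t))
      (2 * Real.sin t * (t - Real.sin t)) t := by
    intro t
    have h1' : HasDerivAt (fun t => Real.sin t * (2 + Real.cos t))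
        (Real.cos t * (2 + Real.cos t) + Real.sin t * (0 + -Real.sin t)) t :=
      (Real.hasDerivAt_sin t).mul ((hasDerivAt_const t 2).add (Real.hasDerivAt_cos t))
    have h2' : HasDerivAt (fun t => t * (1 + 2 * Real.cos t))
        (1 * (1 + 2 * Real.cos t) + t * (0 + 2 * -Real.sin t)) t :=
      (hasDerivAt_id t).mul ((hasDerivAt_const t 1).add
        ((Real.hasDerivAt_cos t).const_mul 2))
    have h := h1'.sub h2'
    refine HasDerivAt.congr_deriv h ?_
    nlinarith [Real.sin_sq_add_cos_sq t]
  have hmono : StrictMonoOn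
      (fun t => Real.sin t * (2 + Real.cos t) - t * (1 + 2 * Real.cos t))
      (Icc 0 (π / 2)) := by
    apply strictMonoOn_of_deriv_pos (convex_Icc _ _)
    · exact Continuous.continuousOn (by continuity)
    · intro t ht
      rw [interior_Icc] at ht
      rw [(hderiv t).deriv]
      have hst : Real.sin t < t := Real.sin_lt ht.1
      have hsp : 0 < Real.sin t :=
        Real.sin_pos_of_pos_of_lt_pi ht.1 (by linarith [Real.pi_pos, ht.2])
      nlinarith
  have h0m : (0 : ℝ) ∈ Icc 0 (π / 2) := ⟨le_refl _, by positivity⟩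
  have hθm : θ ∈ Icc 0 (π / 2) := ⟨h0.le, h1⟩
  have := hmono h0m hθm h0
  simp at this
  linarith

theorem stmt_6 (α : ℝ) (hα : 2 ≤ α) :
    StrictMonoOn (fun x : ℝ => (α + Real.sqrt (1 - x ^ 2)) * Real.arcsin x / x)
      (Set.Ioc 0 1) := by
  apply strictMonoOn_of_deriv_pos (convex_Ioc 0 1)
  · apply ContinuousOn.div
    · exact ((continuous_const.add ((Real.continuous_sqrt).comp
        (by continuity))).mul Real.continuous_arcsin).continuousOn
    · exact continuousOn_id
    · intro x hx; exact ne_of_gt hx.1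
  · intro x hx
    rw [interior_Ioc] at hx
    obtain ⟨hx0, hx1⟩ := hx
    have h1x2 : 0 < 1 - x ^ 2 := by nlinarith
    set c := Real.sqrt (1 - x ^ 2) with hcdef
    have hcpos : 0 < c := Real.sqrt_pos.2 h1x2
    have hc2 : c ^ 2 = 1 - x ^ 2 := Real.sq_sqrt h1x2.le
    have hc1 : c < 1 := by nlinarith
    set s := Real.arcsin x with hsdef
    have hspos : 0 < s := Real.arcsin_pos.2 hx0
    -- key inequality at θ = arcsin x
    have hK : s * (1 + 2 * c) < x * (2 + c) := by
      have hθ2 : s < π / 2 := Real.arcsin_lt_pi_div_two.2 hx1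
      have hsin : Real.sin s = x := Real.sin_arcsin (by linarith) hx1.le
      have hcos : Real.cos s = c := Real.cos_arcsin x
      have := key_ineq s hspos hθ2.le
      rw [hsin, hcos] at this
      linarith
    -- derivative
    have hsqrt : HasDerivAt (fun y : ℝ => Real.sqrt (1 - y ^ 2)) (-(2 * x) / (2 * c)) x := by
      have hinner : HasDerivAt (fun y : ℝ => 1 - y ^ 2) (-(2 * x)) x := by
        simpa using (hasDerivAt_pow 2 x).const_sub 1
      exact hinner.sqrt (ne_of_gt h1x2)
    have harc : HasDerivAt Real.arcsin (1 / c) x :=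
      Real.hasDerivAt_arcsin (by linarith) (ne_of_lt hx1)
    have hf : HasDerivAt (fun y : ℝ => (α + Real.sqrt (1 - y ^ 2)) * Real.arcsin y / y)
        ((((0 + -(2 * x) / (2 * c)) * s + (α + c) * (1 / c)) * x - (α + c) * s * 1) / x ^ 2) x :=
      (((hasDerivAt_const x α).add hsqrt).mul harc).div (hasDerivAt_id x) (ne_of_gt hx0)
    rw [hf.deriv]
    apply div_pos _ (by positivity)
    have hxsc : s * c < x := by
      nlinarith [mul_lt_mul_of_pos_right hK hcpos]
    have hnum : ((0 + -(2 * x) / (2 * c)) * s + (α + c) * (1 / c)) * x - (α + c) * s * 1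
        = (α * (x - s * c) + (c * x - s)) / c := by
      field_simp
      linear_combination (-s) * hc2
    rw [hnum]
    apply div_pos _ hcpos
    nlinarith [mul_nonneg (by linarith : (0:ℝ) ≤ α - 2) (by linarith : (0:ℝ) ≤ x - s * c)]
end

section
/- For every real α ≤ π/2, the function f_α(x) = (α + √(1−x²)) · (arcsin x)/x is strictly decreasing on (0, 1]. -/
open Real Set

private lemma aux_tcos {t : ℝ} (h1 : 0 < t) (h2 : t < π/2) : t * Real.cos t < Real.sin t := by
  have hc : 0 < Real.cos t := Real.cos_pos_of_mem_Ioo ⟨by linarith [Real.pi_pos], h2⟩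
  have h := Real.lt_tan h1 h2
  rw [Real.tan_eq_sin_div_cos] at h
  calc t * Real.cos t < (Real.sin t / Real.cos t) * Real.cos t := by
        exact mul_lt_mul_of_pos_right h hc
    _ = Real.sin t := by field_simp

private lemma sin_ratio_anti : StrictAntiOn (fun t => Real.sin t / t) (Set.Ioc 0 (π/2)) := by
  apply strictAntiOn_of_deriv_neg (convex_Ioc 0 (π/2))
  · exact Real.continuous_sin.continuousOn.div continuousOn_id (fun x hx => ne_of_gt hx.1)
  · intro x hx
    rw [interior_Ioc] at hx
    have hx0 := hx.1
    have hd : HasDerivAt (fun t => Real.sin t / t)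
        ((Real.cos x * x - Real.sin x * 1) / x ^ 2) x :=
      (Real.hasDerivAt_sin x).div (hasDerivAt_id x) (ne_of_gt hx0)
    rw [hd.deriv]
    have h := aux_tcos hx0 hx.2
    have hx2 : 0 < x ^ 2 := by positivity
    apply div_neg_of_neg_of_pos _ hx2
    nlinarith

noncomputable def Gfun (t : ℝ) : ℝ :=
  t - Real.sin t * Real.cos t - π/2 * (Real.sin t - t * Real.cos t)

private lemma G_deriv (t : ℝ) :
    HasDerivAt Gfun (Real.sin t * (2 * Real.sin t - π/2 * t)) t := by
  have h1 : HasDerivAt (fun t => t - Real.sin t * Real.cos t - π/2 * (Real.sin t - t * Real.cos t))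
      (1 - (Real.cos t * Real.cos t + Real.sin t * (-Real.sin t))
        - π/2 * (Real.cos t - (1 * Real.cos t + t * (-Real.sin t)))) t :=
    ((hasDerivAt_id t).sub ((Real.hasDerivAt_sin t).mul (Real.hasDerivAt_cos t))).sub
      (((Real.hasDerivAt_sin t).sub ((hasDerivAt_id t).mul (Real.hasDerivAt_cos t))).const_mul (π/2))
  have heq : Real.sin t * (2 * Real.sin t - π/2 * t)
      = 1 - (Real.cos t * Real.cos t + Real.sin t * (-Real.sin t))
        - π/2 * (Real.cos t - (1 * Real.cos t + t * (-Real.sin t))) := by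
    nlinarith [Real.sin_sq_add_cos_sq t]
  rw [heq]
  exact h1

private lemma G_cont : Continuous Gfun := by
  unfold Gfun
  continuity

private lemma G_pos {θ : ℝ} (h0 : 0 < θ) (h2 : θ < π/2) : 0 < Gfun θ := by
  have hpi := Real.pi_pos
  have hG0 : Gfun 0 = 0 := by simp [Gfun]
  have hGpi2 : Gfun (π/2) = 0 := by simp [Gfun]
  by_cases hc : π/2 * θ ≤ 2 * Real.sin θ
  · -- G strictly increasing on [0, θ]
    have hmono : StrictMonoOn Gfun (Icc 0 θ) := by
      apply strictMonoOn_of_deriv_pos (convex_Icc 0 θ) G_cont.continuousOn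
      intro t ht
      rw [interior_Icc] at ht
      obtain ⟨ht1, ht2⟩ := ht
      rw [(G_deriv t).deriv]
      have hs : 0 < Real.sin t := Real.sin_pos_of_pos_of_lt_pi ht1 (by linarith)
      have hr : Real.sin θ / θ < Real.sin t / t :=
        sin_ratio_anti ⟨ht1, by linarith⟩ ⟨h0, le_of_lt h2⟩ ht2
      have hr' : Real.sin θ * t < Real.sin t * θ := by
        rw [div_lt_div_iff₀ h0 ht1] at hr; linarith
      have hmul : π/2 * θ * t ≤ 2 * Real.sin θ * t :=
        mul_le_mul_of_nonneg_right hc ht1.le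
      have : π/2 * t < 2 * Real.sin t := by nlinarith [mul_pos h0 ht1]
      nlinarith
    have := hmono (left_mem_Icc.2 (le_of_lt h0)) (right_mem_Icc.2 (le_of_lt h0)) h0
    linarith [hG0 ▸ this]
  · -- G strictly decreasing on [θ, π/2]
    push_neg at hc
    have hanti : StrictAntiOn Gfun (Icc θ (π/2)) := by
      apply strictAntiOn_of_deriv_neg (convex_Icc θ (π/2)) G_cont.continuousOn
      intro t ht
      rw [interior_Icc] at ht
      obtain ⟨ht1, ht2⟩ := ht
      rw [(G_deriv t).deriv]
      have ht0 : 0 < t := lt_trans h0 ht1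
      have hs : 0 < Real.sin t := Real.sin_pos_of_pos_of_lt_pi ht0 (by linarith)
      have hr : Real.sin t / t < Real.sin θ / θ :=
        sin_ratio_anti ⟨h0, le_of_lt h2⟩ ⟨ht0, le_of_lt ht2⟩ ht1
      have hr' : Real.sin t * θ < Real.sin θ * t := by
        rw [div_lt_div_iff₀ ht0 h0] at hr; linarith
      have hmul : 2 * Real.sin θ * t < π/2 * θ * t :=
        mul_lt_mul_of_pos_right hc ht0
      have : 2 * Real.sin t < π/2 * t := by nlinarith [mul_pos h0 ht0]
      nlinarith
    have := hanti (left_mem_Icc.2 (le_of_lt h2)) (right_mem_Icc.2 (le_of_lt h2)) h2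
    linarith [hGpi2 ▸ this]

private lemma key_ineq_s7 {x : ℝ} (hx0 : 0 < x) (hx1 : x < 1) :
    (π/2 + Real.sqrt (1 - x ^ 2)) * (x - Real.arcsin x * Real.sqrt (1 - x ^ 2))
      < x ^ 2 * Real.arcsin x := by
  set θ := Real.arcsin x with hθdef
  have hθ0 : 0 < θ := Real.arcsin_pos.2 hx0
  have hθ2 : θ < π/2 := Real.arcsin_lt_pi_div_two.2 hx1
  have hs : Real.sqrt (1 - x ^ 2) = Real.cos θ := (Real.cos_arcsin x).symm
  have hx : Real.sin θ = x := Real.sin_arcsin (by linarith) (le_of_lt hx1)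
  have hG := G_pos hθ0 hθ2
  unfold Gfun at hG
  rw [hx] at hG
  rw [hs]
  have hp : x ^ 2 + Real.cos θ ^ 2 = 1 := by
    rw [← hx]; exact Real.sin_sq_add_cos_sq θ
  have heq : x ^ 2 * θ - (π/2 + Real.cos θ) * (x - θ * Real.cos θ)
      = θ - x * Real.cos θ - π/2 * (x - θ * Real.cos θ) + θ * (x ^ 2 + Real.cos θ ^ 2 - 1) := by
    ring
  rw [hp] at heq
  linarith

theorem stmt_7 (α : ℝ) (hα : α ≤ Real.pi / 2) :
    StrictAntiOn (fun x : ℝ => (α + Real.sqrt (1 - x ^ 2)) * Real.arcsin x / x)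
      (Set.Ioc 0 1) := by
  apply strictAntiOn_of_deriv_neg (convex_Ioc 0 1)
  · apply ContinuousOn.div _ continuousOn_id (fun x hx => ne_of_gt hx.1)
    apply ContinuousOn.mul _ Real.continuous_arcsin.continuousOn
    exact (continuous_const.add (Real.continuous_sqrt.comp
      (continuous_const.sub (continuous_pow 2)))).continuousOn
  · intro x hx
    rw [interior_Ioc] at hx
    obtain ⟨hx0, hx1⟩ := hx
    set s := Real.sqrt (1 - x ^ 2) with hsdef
    have hx2 : (0:ℝ) < 1 - x ^ 2 := by nlinarith
    have hspos : 0 < s := Real.sqrt_pos.2 hx2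
    have hssq : s ^ 2 = 1 - x ^ 2 := Real.sq_sqrt (le_of_lt hx2)
    -- derivative of sqrt (1 - x^2)
    have h1 : HasDerivAt (fun x : ℝ => 1 - x ^ 2) (-(2 * x)) x := by
      simpa using ((hasDerivAt_pow 2 x).const_sub 1)
    have hds : HasDerivAt (fun x : ℝ => Real.sqrt (1 - x ^ 2)) (-x / s) x := by
      have h2 := (Real.hasDerivAt_sqrt (ne_of_gt hx2)).comp x h1
      refine h2.congr_deriv ?_
      rw [hsdef]
      field_simp
    have ha : HasDerivAt Real.arcsin (1 / s) x :=
      Real.hasDerivAt_arcsin (by linarith) (ne_of_lt hx1)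
    have hf : HasDerivAt (fun x : ℝ => (α + Real.sqrt (1 - x ^ 2)) * Real.arcsin x / x)
        (((-x / s * Real.arcsin x + (α + s) * (1 / s)) * x
          - (α + s) * Real.arcsin x * 1) / x ^ 2) x :=
      ((hds.const_add α).mul ha).div (hasDerivAt_id x) (ne_of_gt hx0)
    rw [hf.deriv]
    have hxx2 : 0 < x ^ 2 := by positivity
    apply div_neg_of_neg_of_pos _ hxx2
    set a := Real.arcsin x with hadef
    have ha0 : 0 < a := Real.arcsin_pos.2 hx0
    have hkey : (π/2 + s) * (x - a * s) < x ^ 2 * a := key_ineq_s7 hx0 hx1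
    have hasx : a * s < x := by
      have hθ2 : a < π/2 := Real.arcsin_lt_pi_div_two.2 hx1
      have := aux_tcos ha0 hθ2
      rw [Real.sin_arcsin (by linarith) (le_of_lt hx1)] at this
      rw [hsdef, ← Real.cos_arcsin x]
      linarith
    set N := (-x / s * a + (α + s) * (1 / s)) * x - (α + s) * a * 1 with hNdef
    have hNs : N * s = (α + s) * (x - a * s) - x ^ 2 * a := by
      rw [hNdef]; field_simp; ring
    have hNsneg : N * s < 0 := by
      rw [hNs]
      have h1 : (α + s) * (x - a * s) ≤ (π/2 + s) * (x - a * s) := by nlinarith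
      linarith
    have : N = (N * s) / s := by field_simp
    rw [this]
    exact div_neg_of_neg_of_pos hNsneg hspos
end

section
/- For every real α with π/2 < α < 2, the function f_α(x) = (α + √(1−x²)) · (arcsin x)/x attains a unique minimum on (0, 1); i.e., there exists a unique x₀ ∈ (0,1) such that f_α(x₀) ≤ f_α(x) for all x ∈ (0,1), with strict inequality for x ≠ x₀. -/
open Real Set

namespace Stmt8aux
variable (α : ℝ)

noncomputable def P (θ : ℝ) : ℝ := α * θ - 2 * Real.sin θ
noncomputable def H (θ : ℝ) : ℝ :=
  α * (Real.sin θ - θ * Real.cos θ) + Real.sin θ * Real.cos θ - θ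
noncomputable def G (θ : ℝ) : ℝ := (α + Real.cos θ) * θ / Real.sin θ

lemma hasDerivAt_P (θ : ℝ) : HasDerivAt (P α) (α - 2 * Real.cos θ) θ := by
  have := ((hasDerivAt_id θ).const_mul α).sub ((Real.hasDerivAt_sin θ).const_mul 2)
  exact this.congr_deriv (by ring)

lemma hasDerivAt_H (θ : ℝ) : HasDerivAt (H α) (Real.sin θ * P α θ) θ := by
  have h1 : HasDerivAt (fun t => Real.sin t - t * Real.cos t) (θ * Real.sin θ) θ := by
    have := (Real.hasDerivAt_sin θ).sub ((hasDerivAt_id θ).mul (Real.hasDerivAt_cos θ))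
    refine this.congr_deriv ?_
    simp only [id]; ring
  have h2 : HasDerivAt (fun t => Real.sin t * Real.cos t)
      (Real.cos θ * Real.cos θ - Real.sin θ * Real.sin θ) θ := by
    have := (Real.hasDerivAt_sin θ).mul (Real.hasDerivAt_cos θ)
    refine this.congr_deriv ?_
    ring
  have h3 := ((h1.const_mul α).add h2).sub (hasDerivAt_id θ)
  refine h3.congr_deriv ?_
  have := Real.sin_sq_add_cos_sq θ
  simp only [P, id]
  nlinarith [Real.sin_sq_add_cos_sq θ]

lemma hasDerivAt_G {θ : ℝ} (hs : Real.sin θ ≠ 0) :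
    HasDerivAt (G α) (H α θ / (Real.sin θ) ^ 2) θ := by
  have hnum : HasDerivAt (fun t => (α + Real.cos t) * t)
      ((0 - Real.sin θ) * θ + (α + Real.cos θ) * 1) θ :=
    ((hasDerivAt_const θ α).add (Real.hasDerivAt_cos θ)).mul (hasDerivAt_id θ)
  have hd := hnum.div (Real.hasDerivAt_sin θ) hs
  have key : H α θ = ((0 - Real.sin θ) * θ + (α + Real.cos θ) * 1) * Real.sin θ -
      (α + Real.cos θ) * θ * Real.cos θ := by
    simp only [H]
    linear_combination θ * Real.sin_sq_add_cos_sq θ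
  rw [key]
  exact hd

end Stmt8aux

namespace Stmt8aux
variable (α : ℝ)

lemma contP : Continuous (P α) := by
  unfold P; continuity

lemma contH : Continuous (H α) := by
  unfold H; continuity

lemma main (h1 : Real.pi / 2 < α) (h2 : α < 2) :
    ∃ θ₀ ∈ Ioo 0 (Real.pi/2), ∀ θ ∈ Ioo 0 (Real.pi/2), θ ≠ θ₀ → G α θ₀ < G α θ := by
  have hπ := Real.pi_gt_three
  have hα0 : 0 < α := by linarith
  set c' := Real.arccos (α/2) with hc'def
  have hmem : α/2 ∈ Icc (-1:ℝ) 1 := by constructor <;> nlinarith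
  have hcosc' : Real.cos c' = α/2 := Real.cos_arccos hmem.1 hmem.2
  have hc'pos : 0 < c' := by
    rw [hc'def]; rw [Real.arccos_pos]; linarith
  have hc'lt : c' < Real.pi/2 := by
    rw [hc'def, Real.arccos_lt_pi_div_two]; linarith
  -- P strictly anti on [0, c']
  have hPanti : StrictAntiOn (P α) (Icc 0 c') := by
    apply strictAntiOn_of_deriv_neg (convex_Icc _ _) (contP α).continuousOn
    intro x hx
    rw [interior_Icc] at hx
    rw [(hasDerivAt_P α x).deriv]
    have : Real.cos c' < Real.cos x := by
      apply Real.strictAntiOn_cos ⟨le_of_lt hx.1, by linarith [hx.2]⟩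
        ⟨le_of_lt hc'pos, by linarith⟩ hx.2
    rw [hcosc'] at this; linarith
  have hPmono : StrictMonoOn (P α) (Icc c' (Real.pi/2)) := by
    apply strictMonoOn_of_deriv_pos (convex_Icc _ _) (contP α).continuousOn
    intro x hx
    rw [interior_Icc] at hx
    rw [(hasDerivAt_P α x).deriv]
    have : Real.cos x < Real.cos c' := by
      apply Real.strictAntiOn_cos ⟨by linarith [hc'pos], by linarith⟩
        ⟨by linarith [hx.1, hc'pos], by linarith [hx.2]⟩ hx.1
    rw [hcosc'] at this; linarith
  have hP0 : P α 0 = 0 := by simp [P]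
  have hPc'neg : P α c' < 0 := by
    have := hPanti (left_mem_Icc.mpr (le_of_lt hc'pos)) ⟨le_of_lt hc'pos, le_refl _⟩ hc'pos
    rwa [hP0] at this
  have hPpi2 : 0 < P α (Real.pi/2) := by
    simp [P]; nlinarith
  -- zero of P
  obtain ⟨c, hcmem, hPc⟩ : ∃ c ∈ Ioo c' (Real.pi/2), P α c = 0 := by
    have := intermediate_value_Ioo (le_of_lt hc'lt) (contP α).continuousOn
    have h0 : (0:ℝ) ∈ Ioo (P α c') (P α (Real.pi/2)) := ⟨hPc'neg, hPpi2⟩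
    obtain ⟨c, hc, hPc⟩ := this h0
    exact ⟨c, hc, hPc⟩
  have hcpos : 0 < c := lt_trans hc'pos hcmem.1
  have hclt : c < Real.pi/2 := hcmem.2
  -- sign of P
  have hPneg : ∀ θ ∈ Ioo (0:ℝ) c, P α θ < 0 := by
    intro θ hθ
    rcases le_or_gt θ c' with h | h
    · have := hPanti (left_mem_Icc.mpr (le_of_lt hc'pos)) ⟨le_of_lt hθ.1, h⟩ hθ.1
      rwa [hP0] at this
    · have := hPmono ⟨le_of_lt h, by linarith [hθ.2]⟩ ⟨le_of_lt hcmem.1, le_of_lt hclt⟩ hθ.2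
      rwa [hPc] at this
  have hPpos : ∀ θ ∈ Ioo c (Real.pi/2), 0 < P α θ := by
    intro θ hθ
    have := hPmono ⟨le_of_lt hcmem.1, le_of_lt hclt⟩ ⟨by linarith [hθ.1, hcmem.1], le_of_lt hθ.2⟩ hθ.1
    rwa [hPc] at this
  -- H analysis
  have hH0 : H α 0 = 0 := by simp [H]
  have hHpi2 : 0 < H α (Real.pi/2) := by simp [H]; linarith
  have hHanti : StrictAntiOn (H α) (Icc 0 c) := by
    apply strictAntiOn_of_deriv_neg (convex_Icc _ _) (contH α).continuousOn
    intro x hx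
    rw [interior_Icc] at hx
    rw [(hasDerivAt_H α x).deriv]
    have hsin : 0 < Real.sin x := Real.sin_pos_of_pos_of_lt_pi hx.1 (by nlinarith [hx.2])
    exact mul_neg_of_pos_of_neg hsin (hPneg x hx)
  have hHmono : StrictMonoOn (H α) (Icc c (Real.pi/2)) := by
    apply strictMonoOn_of_deriv_pos (convex_Icc _ _) (contH α).continuousOn
    intro x hx
    rw [interior_Icc] at hx
    rw [(hasDerivAt_H α x).deriv]
    have hsin : 0 < Real.sin x := Real.sin_pos_of_pos_of_lt_pi (by linarith [hx.1]) (by nlinarith [hx.2])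
    exact mul_pos hsin (hPpos x hx)
  have hHcneg : H α c < 0 := by
    have := hHanti (left_mem_Icc.mpr (le_of_lt hcpos)) ⟨le_of_lt hcpos, le_refl _⟩ hcpos
    rwa [hH0] at this
  obtain ⟨θ₀, hθ₀mem, hHθ₀⟩ : ∃ θ₀ ∈ Ioo c (Real.pi/2), H α θ₀ = 0 := by
    have := intermediate_value_Ioo (le_of_lt hclt) (contH α).continuousOn
    obtain ⟨t, ht, hHt⟩ := this ⟨hHcneg, hHpi2⟩
    exact ⟨t, ht, hHt⟩
  have hθ₀pos : 0 < θ₀ := lt_trans hcpos hθ₀mem.1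
  have hθ₀lt : θ₀ < Real.pi/2 := hθ₀mem.2
  -- sign of H
  have hHneg : ∀ θ ∈ Ioo (0:ℝ) θ₀, H α θ < 0 := by
    intro θ hθ
    rcases le_or_gt θ c with h | h
    · rcases eq_or_lt_of_le h with rfl | h'
      · exact hHcneg
      · have := hHanti (left_mem_Icc.mpr (le_of_lt hcpos)) ⟨le_of_lt hθ.1, h⟩ hθ.1
        rwa [hH0] at this
    · have := hHmono ⟨le_of_lt h, by linarith [hθ.2]⟩ ⟨le_of_lt hθ₀mem.1, le_of_lt hθ₀lt⟩ hθ.2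
      rwa [hHθ₀] at this
  have hHpos : ∀ θ ∈ Ioo θ₀ (Real.pi/2), 0 < H α θ := by
    intro θ hθ
    have := hHmono ⟨le_of_lt hθ₀mem.1, le_of_lt hθ₀lt⟩
      ⟨by linarith [hθ.1, hθ₀mem.1], le_of_lt hθ.2⟩ hθ.1
    rwa [hHθ₀] at this
  -- G analysis
  have hsinpos : ∀ θ ∈ Ioo (0:ℝ) (Real.pi/2), 0 < Real.sin θ := fun θ hθ =>
    Real.sin_pos_of_pos_of_lt_pi hθ.1 (by nlinarith [hθ.2])
  have hGcont : ∀ s : Set ℝ, s ⊆ Ioo (0:ℝ) (Real.pi/2) → ContinuousOn (G α) s := by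
    intro s hs x hx
    exact ((hasDerivAt_G α (ne_of_gt (hsinpos x (hs hx)))).differentiableAt).continuousAt.continuousWithinAt
  have hGanti : StrictAntiOn (G α) (Ioc 0 θ₀) := by
    apply strictAntiOn_of_deriv_neg (convex_Ioc _ _)
      (hGcont _ (fun x hx => ⟨hx.1, lt_of_le_of_lt hx.2 hθ₀lt⟩))
    intro x hx
    rw [interior_Ioc] at hx
    have hsx : 0 < Real.sin x := hsinpos x ⟨hx.1, lt_trans hx.2 hθ₀lt⟩
    rw [(hasDerivAt_G α (ne_of_gt hsx)).deriv]
    exact div_neg_of_neg_of_pos (hHneg x hx) (by positivity)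
  have hGmono : StrictMonoOn (G α) (Ico θ₀ (Real.pi/2)) := by
    apply strictMonoOn_of_deriv_pos (convex_Ico _ _)
      (hGcont _ (fun x hx => ⟨lt_of_lt_of_le hθ₀pos hx.1, hx.2⟩))
    intro x hx
    rw [interior_Ico] at hx
    have hsx : 0 < Real.sin x := hsinpos x ⟨lt_trans hθ₀pos hx.1, hx.2⟩
    rw [(hasDerivAt_G α (ne_of_gt hsx)).deriv]
    exact div_pos (hHpos x hx) (by positivity)
  refine ⟨θ₀, ⟨hθ₀pos, hθ₀lt⟩, ?_⟩
  intro θ hθ hne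
  rcases lt_or_gt_of_ne hne with h | h
  · exact hGanti ⟨hθ.1, le_of_lt h⟩ ⟨hθ₀pos, le_refl _⟩ h
  · exact hGmono ⟨le_refl _, hθ₀lt⟩ ⟨le_of_lt h, hθ.2⟩ h

end Stmt8aux

theorem stmt_8 (α : ℝ) (h1 : Real.pi / 2 < α) (h2 : α < 2) :
    ∃! x₀ : ℝ, x₀ ∈ Set.Ioo (0:ℝ) 1 ∧
      ∀ x ∈ Set.Ioo (0:ℝ) 1, x ≠ x₀ →
        (α + Real.sqrt (1 - x₀ ^ 2)) * Real.arcsin x₀ / x₀ <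
        (α + Real.sqrt (1 - x ^ 2)) * Real.arcsin x / x := by
  obtain ⟨θ₀, hθ₀, hmin⟩ := Stmt8aux.main α h1 h2
  have hπ := Real.pi_gt_three
  set x₀ := Real.sin θ₀ with hx₀def
  have hx₀pos : 0 < x₀ := Real.sin_pos_of_pos_of_lt_pi hθ₀.1 (by linarith [hθ₀.2])
  have hx₀lt : x₀ < 1 := by
    have := Real.strictMonoOn_sin (a := θ₀) (b := Real.pi/2)
      ⟨by linarith [hθ₀.1, Real.pi_pos], le_of_lt hθ₀.2⟩
      ⟨by linarith [Real.pi_pos], le_refl _⟩ hθ₀.2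
    simpa using this
  have harc : Real.arcsin x₀ = θ₀ :=
    Real.arcsin_sin (by linarith [hθ₀.1, Real.pi_pos]) (le_of_lt hθ₀.2)
  have hfeq : ∀ x ∈ Set.Ioo (0:ℝ) 1,
      (α + Real.sqrt (1 - x ^ 2)) * Real.arcsin x / x = Stmt8aux.G α (Real.arcsin x) := by
    intro x hx
    rw [Stmt8aux.G, Real.cos_arcsin, Real.sin_arcsin (by linarith [hx.1]) (le_of_lt hx.2)]
  have hx₀mem : x₀ ∈ Set.Ioo (0:ℝ) 1 := ⟨hx₀pos, hx₀lt⟩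
  have hprop : ∀ x ∈ Set.Ioo (0:ℝ) 1, x ≠ x₀ →
      (α + Real.sqrt (1 - x₀ ^ 2)) * Real.arcsin x₀ / x₀ <
      (α + Real.sqrt (1 - x ^ 2)) * Real.arcsin x / x := by
    intro x hx hne
    rw [hfeq x hx, hfeq x₀ hx₀mem, harc]
    have hxmem : Real.arcsin x ∈ Set.Ioo 0 (Real.pi/2) :=
      ⟨Real.arcsin_pos.mpr hx.1, (Real.arcsin_lt_pi_div_two).mpr hx.2⟩
    apply hmin _ hxmem
    intro hcon
    apply hne
    rw [← Real.sin_arcsin (by linarith [hx.1]) (le_of_lt hx.2), hcon]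
  refine ⟨x₀, ⟨hx₀mem, hprop⟩, ?_⟩
  rintro y ⟨hymem, hy⟩
  by_contra hne
  have h3 := hy x₀ hx₀mem (fun h => hne (by rw [h]))
  have h4 := hprop y hymem hne
  linarith
end

section
/- If α ≥ 2, then for all x with 0 ≤ x ≤ 1, (α+1)x / (α + √(1−x²)) ≤ arcsin x ≤ (πα/2)x / (α + √(1−x²)). -/
open Real Set

/-- For `t ∈ [0, π/2]`, `t * cos t ≤ sin t`. -/
lemma aux_tcos_le_sin {t : ℝ} (h0 : 0 ≤ t) (h1 : t ≤ π / 2) : t * Real.cos t ≤ Real.sin t := by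
  rcases eq_or_lt_of_le h0 with h | h
  · simp [← h]
  rcases eq_or_lt_of_le h1 with h2 | h2
  · rw [h2]; simp [Real.cos_pi_div_two]
  have hc : 0 < Real.cos t := Real.cos_pos_of_mem_Ioo ⟨by linarith [Real.pi_pos], h2⟩
  have := Real.lt_tan h h2
  rw [Real.tan_eq_sin_div_cos, lt_div_iff₀ hc] at this
  linarith

/-- Lower Shafer–Fink in trigonometric form. -/
lemma aux_lower (α : ℝ) (hα : 2 ≤ α) {θ : ℝ} (h0 : 0 ≤ θ) (h1 : θ ≤ π / 2) :
    (α + 1) * Real.sin θ ≤ θ * (α + Real.cos θ) := by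
  set f : ℝ → ℝ := fun t => t * (α + Real.cos t) - (α + 1) * Real.sin t with hf
  have hd : ∀ t : ℝ, HasDerivAt f (α * (1 - Real.cos t) - t * Real.sin t) t := by
    intro t
    have h1' : HasDerivAt (fun t : ℝ => t * (α + Real.cos t))
        (1 * (α + Real.cos t) + t * (0 + -Real.sin t)) t :=
      (hasDerivAt_id t).mul ((hasDerivAt_const t α).add (Real.hasDerivAt_cos t))
    have h2' : HasDerivAt (fun t : ℝ => (α + 1) * Real.sin t) ((α + 1) * Real.cos t) t :=
      (Real.hasDerivAt_sin t).const_mul (α + 1)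
    have := h1'.sub h2'
    refine this.congr_deriv ?_
    ring
  have hmono : MonotoneOn f (Icc 0 (π / 2)) := by
    apply monotoneOn_of_deriv_nonneg (convex_Icc _ _)
      (fun t _ => ((hd t).sub_const 0).continuousAt.continuousWithinAt
        |>.congr (fun y _ => by ring_nf) (by ring_nf))
      (fun t _ => ((hd t).differentiableAt).differentiableWithinAt)
    intro t ht
    rw [interior_Icc] at ht
    rw [(hd t).deriv]
    obtain ⟨ht0, ht1⟩ := ht
    -- reduce to half-angle
    have hs : Real.sin t = 2 * Real.sin (t / 2) * Real.cos (t / 2) := by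
      rw [← Real.sin_two_mul]; ring_nf
    have hc : Real.cos t = 1 - 2 * Real.sin (t / 2) ^ 2 := by
      have h2 : Real.cos (2 * (t / 2)) = Real.cos (t/2) ^ 2 - Real.sin (t/2) ^ 2 :=
        Real.cos_two_mul' _
      have h3 := Real.sin_sq_add_cos_sq (t / 2)
      have : (2 : ℝ) * (t / 2) = t := by ring
      rw [this] at h2
      nlinarith
    have hs0 : 0 ≤ Real.sin (t / 2) :=
      Real.sin_nonneg_of_nonneg_of_le_pi (by linarith) (by linarith [Real.pi_pos])
    have htan : (t / 2) * Real.cos (t / 2) ≤ Real.sin (t / 2) :=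
      aux_tcos_le_sin (by linarith) (by linarith)
    have hcos1 : Real.cos t ≤ 1 := Real.cos_le_one t
    nlinarith [mul_nonneg hs0 (sub_nonneg.mpr htan), sq_nonneg (Real.sin (t/2))]
  have h00 : f 0 = 0 := by simp [hf]
  have := hmono (left_mem_Icc.mpr (by linarith [Real.pi_pos])) ⟨h0, h1⟩ h0
  rw [h00] at this
  simp only [hf] at this
  linarith

/-- Upper Shafer–Fink in trigonometric form. -/
lemma aux_upper (α : ℝ) (hα : 2 ≤ α) {θ : ℝ} (h0 : 0 ≤ θ) (h1 : θ ≤ π / 2) :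
    θ * (α + Real.cos θ) ≤ (π * α / 2) * Real.sin θ := by
  set c : ℝ := π * α / 2 with hc
  set g : ℝ → ℝ := fun t => c * Real.sin t - t * (α + Real.cos t) with hg
  set g' : ℝ → ℝ := fun t => c * Real.cos t - (α + Real.cos t) + t * Real.sin t with hg'
  set g'' : ℝ → ℝ := fun t => (2 - c) * Real.sin t + t * Real.cos t with hg''
  have hd : ∀ t : ℝ, HasDerivAt g (g' t) t := by
    intro t
    have h1' : HasDerivAt (fun t : ℝ => c * Real.sin t) (c * Real.cos t) t :=
      (Real.hasDerivAt_sin t).const_mul c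
    have h2' : HasDerivAt (fun t : ℝ => t * (α + Real.cos t))
        (1 * (α + Real.cos t) + t * (0 + -Real.sin t)) t :=
      (hasDerivAt_id t).mul ((hasDerivAt_const t α).add (Real.hasDerivAt_cos t))
    have := h1'.sub h2'
    refine this.congr_deriv ?_
    simp only [hg']; ring
  have hd2 : ∀ t : ℝ, HasDerivAt g' (g'' t) t := by
    intro t
    have h1' : HasDerivAt (fun t : ℝ => c * Real.cos t) (c * -Real.sin t) t :=
      (Real.hasDerivAt_cos t).const_mul c
    have h2' : HasDerivAt (fun t : ℝ => α + Real.cos t) (0 + -Real.sin t) t :=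
      (hasDerivAt_const t α).add (Real.hasDerivAt_cos t)
    have h3' : HasDerivAt (fun t : ℝ => t * Real.sin t)
        (1 * Real.sin t + t * Real.cos t) t :=
      (hasDerivAt_id t).mul (Real.hasDerivAt_sin t)
    have := (h1'.sub h2').add h3'
    refine this.congr_deriv ?_
    simp only [hg'']; ring
  have hcge : (3 : ℝ) ≤ c := by
    have : (3 : ℝ) ≤ π := by linarith [Real.pi_gt_d6]
    have h2 : π * 2 / 2 ≤ π * α / 2 := by
      apply div_le_div_of_nonneg_right _ (by norm_num)
      exact mul_le_mul_of_nonneg_left hα (le_of_lt Real.pi_pos)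
    simp only [hc]
    nlinarith [Real.pi_pos]
  have hconc : ConcaveOn ℝ (Icc 0 (π / 2)) g := by
    apply concaveOn_of_hasDerivWithinAt2_nonpos (f' := g') (f'' := g'') (convex_Icc _ _)
      (fun t _ => (hd t).continuousAt.continuousWithinAt)
      (fun t _ => (hd t).hasDerivWithinAt)
      (fun t _ => (hd2 t).hasDerivWithinAt)
    intro t ht
    rw [interior_Icc] at ht
    obtain ⟨ht0, ht1⟩ := ht
    have hsin : 0 ≤ Real.sin t :=
      Real.sin_nonneg_of_nonneg_of_le_pi (le_of_lt ht0) (by linarith [Real.pi_pos])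
    have htan : t * Real.cos t ≤ Real.sin t := aux_tcos_le_sin (le_of_lt ht0) (le_of_lt ht1)
    simp only [hg'']
    nlinarith
  have hpi : (0:ℝ) < π / 2 := by linarith [Real.pi_pos]
  have hg0 : g 0 = 0 := by simp [hg]
  have hgpi : g (π / 2) = 0 := by
    simp only [hg, Real.sin_pi_div_two, Real.cos_pi_div_two, hc]
    ring
  -- convex combination: θ = a·0 + b·(π/2)
  set b : ℝ := θ / (π / 2) with hb
  have hb0 : 0 ≤ b := div_nonneg h0 (le_of_lt hpi)
  have hb1 : b ≤ 1 := (div_le_one hpi).mpr h1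
  have key := hconc.2 (left_mem_Icc.mpr (le_of_lt hpi))
      (right_mem_Icc.mpr (le_of_lt hpi)) (by linarith : (0:ℝ) ≤ 1 - b) hb0 (by ring)
  have hcomb : (1 - b) • (0:ℝ) + b • (π / 2) = θ := by
    simp only [smul_eq_mul, mul_zero, zero_add, hb]
    field_simp
  rw [hcomb, hg0, hgpi] at key
  simp only [smul_eq_mul, mul_zero, add_zero, zero_add] at key
  have : 0 ≤ g θ := by linarith [key]
  simp only [hg] at this
  linarith

theorem stmt_9 (α : ℝ) (hα : 2 ≤ α) (x : ℝ) (hx : 0 ≤ x) (hx1 : x ≤ 1) :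
    (α + 1) * x / (α + Real.sqrt (1 - x ^ 2)) ≤ Real.arcsin x ∧
    Real.arcsin x ≤ (Real.pi * α / 2) * x / (α + Real.sqrt (1 - x ^ 2)) := by
  set θ := Real.arcsin x with hθ
  have hθ0 : 0 ≤ θ := Real.arcsin_nonneg.mpr hx
  have hθ1 : θ ≤ π / 2 := Real.arcsin_le_pi_div_two x
  have hsin : Real.sin θ = x := Real.sin_arcsin (by linarith) hx1
  have hcos : Real.cos θ = Real.sqrt (1 - x ^ 2) := Real.cos_arcsin x
  have hD : 0 < α + Real.sqrt (1 - x ^ 2) := by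
    have := Real.sqrt_nonneg (1 - x ^ 2)
    linarith
  constructor
  · rw [div_le_iff₀ hD]
    have := aux_lower α hα hθ0 hθ1
    rw [hsin, hcos] at this
    linarith
  · rw [le_div_iff₀ hD]
    have := aux_upper α hα hθ0 hθ1
    rw [hsin, hcos] at this
    linarith
end

section
/- If 0 < α ≤ π/2, then for all x with 0 ≤ x ≤ 1, (πα/2)x / (α + √(1−x²)) ≤ arcsin x ≤ (α+1)x / (α + √(1−x²)). -/
open Real Set

lemma concave_nonneg {A B : ℝ} {f f' f'' : ℝ → ℝ} (hAB : A ≤ B)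
    (hd : ∀ x, HasDerivAt f (f' x) x)
    (hd' : ∀ x, HasDerivAt f' (f'' x) x)
    (h2 : ∀ x ∈ Set.Ioo A B, f'' x ≤ 0)
    (hA : 0 ≤ f A) (hB : 0 ≤ f B) :
    ∀ x ∈ Set.Icc A B, 0 ≤ f x := by
  have hcc : ConcaveOn ℝ (Set.Icc A B) f := by
    apply concaveOn_of_hasDerivWithinAt2_nonpos (convex_Icc A B)
      (f' := f') (f'' := f'')
    · exact (Differentiable.continuous (fun x => (hd x).differentiableAt)).continuousOn
    · intro x hx; exact (hd x).hasDerivWithinAt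
    · intro x hx; exact (hd' x).hasDerivWithinAt
    · intro x hx; exact h2 x (by rwa [interior_Icc] at hx)
  intro x hx
  rcases eq_or_lt_of_le hAB with h | h
  · subst h
    have : x = A := le_antisymm hx.2 hx.1
    subst this; exact hA
  · have hBA : 0 < B - A := by linarith
    set a := (B - x) / (B - A) with ha_def
    set b := (x - A) / (B - A) with hb_def
    have ha : 0 ≤ a := div_nonneg (by linarith [hx.2]) hBA.le
    have hb : 0 ≤ b := div_nonneg (by linarith [hx.1]) hBA.le
    have hab : a + b = 1 := by rw [ha_def, hb_def, ← add_div, div_eq_one_iff_eq hBA.ne']; ring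
    have hcomb := hcc.2 (left_mem_Icc.2 hAB) (right_mem_Icc.2 hAB) ha hb hab
    have hxe : a • A + b • B = x := by
      simp only [smul_eq_mul, ha_def, hb_def]; field_simp; ring
    rw [hxe] at hcomb
    have h1 : 0 ≤ a * f A := mul_nonneg ha hA
    have h2' : 0 ≤ b * f B := mul_nonneg hb hB
    simp only [smul_eq_mul] at hcomb
    linarith


lemma p_nonneg : ∀ u ∈ Set.Icc 0 (π/4), 0 ≤ 4*u*Real.cos u - π * Real.sin u := by
  have hd : ∀ u : ℝ, HasDerivAt (fun u => 4*u*Real.cos u - π * Real.sin u)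
      ((4*Real.cos u - 4*u*Real.sin u) - π * Real.cos u) u := by
    intro u
    have h1 : HasDerivAt (fun u : ℝ => 4*u) 4 u := by
      simpa using (hasDerivAt_id u).const_mul (4:ℝ)
    have h2 := (h1.mul (Real.hasDerivAt_cos u)).sub ((Real.hasDerivAt_sin u).const_mul π)
    refine h2.congr_deriv ?_
    ring
  have hd' : ∀ u : ℝ, HasDerivAt (fun u => (4*Real.cos u - 4*u*Real.sin u) - π * Real.cos u)
      ((π - 8) * Real.sin u - 4*u*Real.cos u) u := by
    intro u
    have h1 : HasDerivAt (fun u : ℝ => 4*u) 4 u := by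
      simpa using (hasDerivAt_id u).const_mul (4:ℝ)
    have h2 := (((Real.hasDerivAt_cos u).const_mul (4:ℝ)).sub
      (h1.mul (Real.hasDerivAt_sin u))).sub ((Real.hasDerivAt_cos u).const_mul π)
    refine h2.congr_deriv ?_
    ring
  apply concave_nonneg (by positivity : (0:ℝ) ≤ π/4) hd hd'
  · intro u hu
    have hs : 0 ≤ Real.sin u := Real.sin_nonneg_of_nonneg_of_le_pi hu.1.le
      (by nlinarith [Real.pi_pos, hu.2])
    have hpi := Real.pi_pos
    have hc : 0 ≤ Real.cos u := Real.cos_nonneg_of_mem_Icc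
      ⟨by linarith [hu.1], by linarith [hu.2]⟩
    have h8 : (0:ℝ) ≤ 8 - π := by linarith [Real.pi_lt_d2]
    nlinarith [mul_nonneg hs h8, mul_nonneg hu.1.le hc]
  · simp
  · have : 4*(π/4)*Real.cos (π/4) - π * Real.sin (π/4) = 0 := by
      rw [Real.cos_pi_div_four, Real.sin_pi_div_four]; ring
    rw [this]

lemma keyK : ∀ θ ∈ Set.Icc 0 (π/2), (π/2) * (1 - Real.cos θ) ≤ θ * Real.sin θ := by
  intro θ hθ
  have hu : θ/2 ∈ Set.Icc 0 (π/4) := ⟨by linarith [hθ.1], by linarith [hθ.2]⟩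
  have hp := p_nonneg (θ/2) hu
  have hs : 0 ≤ Real.sin (θ/2) := Real.sin_nonneg_of_nonneg_of_le_pi hu.1
    (by nlinarith [Real.pi_pos, hu.2])
  have h2 : θ = 2 * (θ/2) := by ring
  rw [h2, Real.sin_two_mul, Real.cos_two_mul]
  have pyth := Real.sin_sq_add_cos_sq (θ/2)
  nlinarith [mul_nonneg hs hp, Real.pi_pos]

lemma gB' : ∀ φ ∈ Set.Icc (0:ℝ) (11/20),
    0 ≤ (π/2)*(π/2 - φ) + (π/2 - φ)*Real.sin φ - (π^2/4)*Real.cos φ := by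
  intro φ hφ
  obtain ⟨hφ0, hφ1⟩ := hφ
  have habs : |φ| ≤ 1 := by rw [abs_of_nonneg hφ0]; linarith
  have hc := abs_le.1 (Real.cos_bound habs)
  have hs := abs_le.1 (Real.sin_bound habs)
  rw [abs_of_nonneg hφ0] at hc hs
  have hπl := Real.pi_gt_d6
  have hπu := Real.pi_lt_d6
  have hππl : (9.8696:ℝ) < π^2 := by nlinarith
  have hππu : π^2 < (9.8697:ℝ) := by nlinarith
  have h1 : (π^2/4) * (Real.cos φ - (1 - φ^2/2)) ≤ (π^2/4) * (φ^4*(5/96)) :=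
    mul_le_mul_of_nonneg_left hc.2 (by positivity)
  have h2 : (π/2) * (-(φ^4*(5/96))) ≤ (π/2) * (Real.sin φ - (φ - φ^3/6)) :=
    mul_le_mul_of_nonneg_left (le_trans (by nlinarith [mul_le_mul_of_nonneg_right hφ1 (pow_nonneg hφ0 4), pow_nonneg hφ0 4]) hs.1) (by positivity)
  have h3 : φ * (Real.sin φ - (φ - φ^3/6)) ≤ φ * (φ^4*(5/96)) :=
    mul_le_mul_of_nonneg_left (le_trans hs.2 (by nlinarith [mul_le_mul_of_nonneg_right hφ1 (pow_nonneg hφ0 4), pow_nonneg hφ0 4])) hφ0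
  have k1 : 0 ≤ (11/20 - φ) * φ^2 := by nlinarith
  have k2 : 0 ≤ (11/20 - φ) * φ^3 := by nlinarith [mul_nonneg (mul_nonneg hφ0 hφ0) hφ0]
  have k3 : 0 ≤ (11/20 - φ) * φ^4 := by nlinarith [mul_nonneg k1 (sq_nonneg φ)]
  nlinarith [h1, h2, h3, k1, k2, k3, sq_nonneg φ,
    mul_nonneg (mul_nonneg hφ0 hφ0) hφ0, pow_nonneg hφ0 4, pow_nonneg hφ0 5]

lemma gB : ∀ θ ∈ Set.Icc (π/2 - 11/20) (π/2),
    0 ≤ (π/2)*θ + θ*Real.cos θ - (π^2/4)*Real.sin θ := by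
  intro θ hθ
  have h := gB' (π/2 - θ) ⟨by linarith [hθ.2], by linarith [hθ.1]⟩
  rw [Real.sin_pi_div_two_sub, Real.cos_pi_div_two_sub] at h
  have he : π/2 - (π/2 - θ) = θ := by ring
  rw [he] at h
  linarith

lemma g_nonneg : ∀ θ ∈ Set.Icc 0 (π/2),
    0 ≤ (π/2)*θ + θ*Real.cos θ - (π^2/4)*Real.sin θ := by
  have hπl := Real.pi_gt_d6
  have hπu := Real.pi_lt_d6
  have hππu : π^2 < (9.8697:ℝ) := by nlinarith
  have ha0 : (0:ℝ) ≤ π/2 - 11/20 := by linarith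
  -- cos (π/2 - 11/20) = sin (11/20) ≥ 11/20 - (11/20)^3/4
  have hca : (0.5084:ℝ) ≤ Real.cos (π/2 - 11/20) := by
    rw [Real.cos_pi_div_two_sub]
    have := Real.sin_gt_sub_cube (by norm_num : (0:ℝ) < 11/20)
    nlinarith
  have hA : ∀ θ ∈ Set.Icc 0 (π/2 - 11/20),
      0 ≤ (π/2)*θ + θ*Real.cos θ - (π^2/4)*Real.sin θ := by
    have hd : ∀ t : ℝ, HasDerivAt (fun t => (π/2)*t + t*Real.cos t - (π^2/4)*Real.sin t)
        ((π/2) + (Real.cos t - t*Real.sin t) - (π^2/4)*Real.cos t) t := by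
      intro t
      have h1 : HasDerivAt (fun t : ℝ => (π/2)*t) (π/2) t := by
        simpa using (hasDerivAt_id t).const_mul (π/2)
      have h2 := ((h1.add ((hasDerivAt_id t).mul (Real.hasDerivAt_cos t))).sub
        ((Real.hasDerivAt_sin t).const_mul (π^2/4)))
      simp only [id_eq] at h2
      refine h2.congr_deriv ?_
      ring
    have hd' : ∀ t : ℝ, HasDerivAt (fun t => (π/2) + (Real.cos t - t*Real.sin t) - (π^2/4)*Real.cos t)
        ((π^2/4 - 2)*Real.sin t - t*Real.cos t) t := by
      intro t
      have h2 := ((hasDerivAt_const t (π/2)).add ((Real.hasDerivAt_cos t).sub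
        ((hasDerivAt_id t).mul (Real.hasDerivAt_sin t)))).sub
        ((Real.hasDerivAt_cos t).const_mul (π^2/4))
      simp only [id_eq] at h2
      refine h2.congr_deriv ?_
      ring
    apply concave_nonneg ha0 hd hd'
    · intro t ht
      have hs0 : 0 ≤ Real.sin t := Real.sin_nonneg_of_nonneg_of_le_pi ht.1.le (by linarith [ht.2])
      have hsle : Real.sin t ≤ t := Real.sin_le ht.1.le
      have hcos : Real.cos (π/2 - 11/20) ≤ Real.cos t :=
        Real.cos_le_cos_of_nonneg_of_le_pi ht.1.le (by linarith) ht.2.le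
      nlinarith [mul_nonneg ht.1.le (sub_nonneg.2 hsle), ht.1.le,
        mul_le_mul_of_nonneg_left hsle (by norm_num : (0:ℝ) ≤ 0.5084),
        mul_le_mul_of_nonneg_right (le_trans hca hcos) ht.1.le]
    · simp
    · exact gB _ ⟨le_refl _, by linarith⟩
  intro θ hθ
  rcases le_or_gt θ (π/2 - 11/20) with h | h
  · exact hA θ ⟨hθ.1, h⟩
  · exact gB θ ⟨h.le, hθ.2⟩

lemma upper_aux (α : ℝ) (hα0 : 0 < α) (hα : α ≤ π/2) :
    ∀ θ ∈ Set.Icc 0 (π/2), α*θ + θ*Real.cos θ ≤ (α+1)*Real.sin θ := by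
  have hd : ∀ t : ℝ, HasDerivAt (fun t => (α+1)*Real.sin t - α*t - t*Real.cos t)
      (α*Real.cos t - α + t*Real.sin t) t := by
    intro t
    have h1 : HasDerivAt (fun t : ℝ => α*t) α t := by
      simpa using (hasDerivAt_id t).const_mul α
    have h2 := (((Real.hasDerivAt_sin t).const_mul (α+1)).sub h1).sub
      ((hasDerivAt_id t).mul (Real.hasDerivAt_cos t))
    simp only [id_eq] at h2
    refine h2.congr_deriv ?_
    ring
  have hmono : MonotoneOn (fun t => (α+1)*Real.sin t - α*t - t*Real.cos t) (Set.Icc 0 (π/2)) := by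
    apply monotoneOn_of_deriv_nonneg (convex_Icc 0 (π/2))
    · exact (Differentiable.continuous (fun t => (hd t).differentiableAt)).continuousOn
    · exact fun t _ => ((hd t).differentiableAt).differentiableWithinAt
    · intro t ht
      rw [interior_Icc] at ht
      rw [(hd t).deriv]
      have hK := keyK t ⟨ht.1.le, ht.2.le⟩
      have hc1 : Real.cos t ≤ 1 := Real.cos_le_one t
      nlinarith [mul_le_mul_of_nonneg_right hα (by linarith : (0:ℝ) ≤ 1 - Real.cos t)]
  intro θ hθ
  have h0 : (0:ℝ) ∈ Set.Icc (0:ℝ) (π/2) := ⟨le_refl _, by positivity⟩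
  have := hmono h0 hθ hθ.1
  simp at this
  nlinarith [this]

theorem stmt_10 (α : ℝ) (hα0 : 0 < α) (hα : α ≤ Real.pi / 2)
    (x : ℝ) (hx : 0 ≤ x) (hx1 : x ≤ 1) :
    (Real.pi * α / 2) * x / (α + Real.sqrt (1 - x ^ 2)) ≤ Real.arcsin x ∧
    Real.arcsin x ≤ (α + 1) * x / (α + Real.sqrt (1 - x ^ 2)) := by
  set θ := Real.arcsin x with hθdef
  have hθ0 : 0 ≤ θ := Real.arcsin_nonneg.2 hx
  have hθπ : θ ≤ π/2 := Real.arcsin_le_pi_div_two x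
  have hsin : Real.sin θ = x := Real.sin_arcsin (by linarith) hx1
  have hcos : Real.cos θ = Real.sqrt (1 - x^2) := Real.cos_arcsin x
  have hsqrt0 : 0 ≤ Real.sqrt (1 - x^2) := Real.sqrt_nonneg _
  have hden : 0 < α + Real.sqrt (1 - x^2) := by linarith
  constructor
  · rw [div_le_iff₀ hden]
    have hg := g_nonneg θ ⟨hθ0, hθπ⟩
    rw [hsin, hcos] at hg
    have hθc : 0 ≤ θ * Real.sqrt (1 - x^2) := mul_nonneg hθ0 hsqrt0
    nlinarith [mul_nonneg hα0.le hg, mul_nonneg (by linarith : (0:ℝ) ≤ π/2 - α) hθc,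
      Real.pi_pos]
  · rw [le_div_iff₀ hden]
    have hu := upper_aux α hα0 hα θ ⟨hθ0, hθπ⟩
    rw [hsin, hcos] at hu
    nlinarith [hu]
end

section
/- If π/2 < α < 2, then for all x with 0 ≤ x ≤ 1, 4(1 − 1/α²)x / (α + √(1−x²)) ≤ arcsin x ≤ max{πα/2, α+1} · x / (α + √(1−x²)). -/
open Real

private lemma deriv_aux (f g : ℝ → ℝ) (hf : ∀ t, HasDerivAt f (g t) t)
    (hg : ∀ t, 0 ≤ t → 0 ≤ g t) (hf0 : f 0 = 0) {x : ℝ} (hx : 0 ≤ x) : 0 ≤ f x := by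
  have mono : MonotoneOn f (Set.Ici 0) := by
    apply monotoneOn_of_deriv_nonneg (convex_Ici 0)
    · exact fun t _ => (hf t).continuousAt.continuousWithinAt
    · exact fun t _ => (hf t).differentiableAt.differentiableWithinAt
    · intro t ht
      rw [(hf t).deriv]
      exact hg t (le_of_lt (by simpa [interior_Ici] using ht))
  have h := mono Set.self_mem_Ici (Set.mem_Ici.2 hx) hx
  rw [hf0] at h
  exact h

private lemma sin_lower3 {x : ℝ} (hx : 0 ≤ x) : x - x^3/6 ≤ Real.sin x := by
  have h := deriv_aux (fun t => Real.sin t - (t - t^3/6))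
    (fun t => Real.cos t - (1 - t^2/2))
    (fun t => by
      have h1 : HasDerivAt (fun t : ℝ => t - t^3/6) (1 - 3*t^2/6) t := by
        simpa [Pi.sub_def, Pi.add_def] using (hasDerivAt_id t).sub ((hasDerivAt_pow 3 t).div_const 6)
      have := (Real.hasDerivAt_sin t).sub h1
      exact this.congr_deriv (by ring))
    (fun t _ => by nlinarith [Real.one_sub_sq_div_two_le_cos (x := t)])
    (by norm_num) hx
  simpa using h

private lemma cos_upper4 {x : ℝ} (hx : 0 ≤ x) : Real.cos x ≤ 1 - x^2/2 + x^4/24 := by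
  have h := deriv_aux (fun t => 1 - t^2/2 + t^4/24 - Real.cos t)
    (fun t => -(2*t/2) + 4*t^3/24 + Real.sin t)
    (fun t => by
      have h1 : HasDerivAt (fun t : ℝ => 1 - t^2/2 + t^4/24) (-(2*t/2) + 4*t^3/24) t := by
        simpa [Pi.sub_def, Pi.add_def] using (((hasDerivAt_const t (1:ℝ)).sub ((hasDerivAt_pow 2 t).div_const 2)).add
          ((hasDerivAt_pow 4 t).div_const 24))
      have := h1.sub (Real.hasDerivAt_cos t)
      exact this.congr_deriv (by ring))
    (fun t ht => by nlinarith [sin_lower3 ht])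
    (by norm_num) hx
  nlinarith [h]

private lemma sin_upper5 {x : ℝ} (hx : 0 ≤ x) : Real.sin x ≤ x - x^3/6 + x^5/120 := by
  have h := deriv_aux (fun t => t - t^3/6 + t^5/120 - Real.sin t)
    (fun t => 1 - 3*t^2/6 + 5*t^4/120 - Real.cos t)
    (fun t => by
      have h1 : HasDerivAt (fun t : ℝ => t - t^3/6 + t^5/120) (1 - 3*t^2/6 + 5*t^4/120) t := by
        simpa [Pi.sub_def, Pi.add_def] using (((hasDerivAt_id t).sub ((hasDerivAt_pow 3 t).div_const 6)).add
          ((hasDerivAt_pow 5 t).div_const 120))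
      exact h1.sub (Real.hasDerivAt_sin t))
    (fun t ht => by nlinarith [cos_upper4 ht])
    (by norm_num) hx
  nlinarith [h]

private lemma cos_lower6 {x : ℝ} (hx : 0 ≤ x) :
    1 - x^2/2 + x^4/24 - x^6/720 ≤ Real.cos x := by
  have h := deriv_aux (fun t => Real.cos t - (1 - t^2/2 + t^4/24 - t^6/720))
    (fun t => -Real.sin t - (-(2*t/2) + 4*t^3/24 - 6*t^5/720))
    (fun t => by
      have h1 : HasDerivAt (fun t : ℝ => 1 - t^2/2 + t^4/24 - t^6/720)
          (-(2*t/2) + 4*t^3/24 - 6*t^5/720) t := by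
        simpa [Pi.sub_def, Pi.add_def] using ((((hasDerivAt_const t (1:ℝ)).sub ((hasDerivAt_pow 2 t).div_const 2)).add
          ((hasDerivAt_pow 4 t).div_const 24)).sub ((hasDerivAt_pow 6 t).div_const 720))
      exact (Real.hasDerivAt_cos t).sub h1)
    (fun t ht => by nlinarith [sin_upper5 ht])
    (by norm_num) hx
  nlinarith [h]

private lemma sin_lower7 {x : ℝ} (hx : 0 ≤ x) :
    x - x^3/6 + x^5/120 - x^7/5040 ≤ Real.sin x := by
  have h := deriv_aux (fun t => Real.sin t - (t - t^3/6 + t^5/120 - t^7/5040))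
    (fun t => Real.cos t - (1 - 3*t^2/6 + 5*t^4/120 - 7*t^6/5040))
    (fun t => by
      have h1 : HasDerivAt (fun t : ℝ => t - t^3/6 + t^5/120 - t^7/5040)
          (1 - 3*t^2/6 + 5*t^4/120 - 7*t^6/5040) t := by
        simpa [Pi.sub_def, Pi.add_def] using ((((hasDerivAt_id t).sub ((hasDerivAt_pow 3 t).div_const 6)).add
          ((hasDerivAt_pow 5 t).div_const 120)).sub ((hasDerivAt_pow 7 t).div_const 5040))
      exact (Real.hasDerivAt_sin t).sub h1)
    (fun t ht => by nlinarith [cos_lower6 ht])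
    (by norm_num) hx
  nlinarith [h]


private lemma coreQ (α t : ℝ) (h1 : 1.57 ≤ α) (h2 : α ≤ 2) (ht0 : 0 ≤ t) (ht1 : t ≤ 2.4675) :
    0 ≤ 720*α^3 - 2160*α^2 + 2880 + (120*α^2 - 480)*t + (6*α^2 + 24)*t^2 - α^2*t^3 := by
  nlinarith [sq_nonneg (6*(2-α) - t), sq_nonneg (12*(2-α) - t), mul_nonneg (sub_nonneg.2 h2) ht0,
    mul_nonneg (mul_nonneg (sub_nonneg.2 h2) ht0) ht0, sq_nonneg (2-α), sq_nonneg t,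
    mul_nonneg (mul_nonneg ht0 ht0) (sub_nonneg.2 ht1), sq_nonneg ((2-α)*t)]

private lemma coreA_small (α t : ℝ) (h1 : 1.57 ≤ α) (h2 : α ≤ 1.752) (ht0 : 0 ≤ t)
    (ht1 : t ≤ 1.6641) : 0 ≤ 840*(2-α) - 42*t*(4-α) - (α+1)*t^2 := by
  nlinarith [mul_nonneg ht0 (sub_nonneg.2 h2), sq_nonneg t, mul_nonneg ht0 ht0]

private lemma alphaA_ub (α p : ℝ) (hp1 : 3.141592 < p) (h1 : p/2 < α) (hV : p*α/2 ≤ α+1) :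
    α ≤ 1.752 := by nlinarith

private lemma coreA_large (α f p : ℝ) (hp1 : 3.141592 < p) (hp2 : p < 3.141593)
    (h1 : p/2 < α) (h2 : α < 2) (hV : p*α/2 ≤ α+1) (hf0 : 0 ≤ f) (hf1 : f ≤ 0.281) :
    (p/2-f)*(α+f) ≤ (α+1)*(1-f^2/2) := by
  have hV' : 0 ≤ α+1-p*α/2 := by linarith
  have hA : 0 ≤ α - p/2 := by linarith
  nlinarith [mul_nonneg hf0 hV', mul_nonneg (sub_nonneg.2 hf1) hV', mul_nonneg hf0 hA,
    mul_nonneg (mul_nonneg hf0 (sub_nonneg.2 hf1)) (by linarith : (0:ℝ) ≤ α - 1),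
    mul_nonneg (sub_nonneg.2 hf1) hA, sq_nonneg f]

private lemma alphaB_lb (α p : ℝ) (hp1 : 3.141592 < p) (hp2 : p < 3.141593)
    (h1 : p/2 < α) (hV : α+1 ≤ p*α/2) : 1.7519 ≤ α := by nlinarith

private lemma coreB_small (α t p : ℝ) (hp1 : 3.141592 < p) (hp2 : p < 3.141593)
    (h1 : p/2 < α) (h2 : α < 2) (hV : α+1 ≤ p*α/2) (ht0 : 0 ≤ t) (ht1 : t ≤ 0.64) :
    0 ≤ (p*α/2-α-1) + t*(1/2 - p*α/12) - t^2/24 := by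
  have hV' : 0 ≤ p*α/2-α-1 := by linarith
  have hα : 1.7519 ≤ α := alphaB_lb α p hp1 hp2 h1 hV
  nlinarith [mul_nonneg ht0 hV', mul_nonneg (sub_nonneg.2 ht1) hV',
    mul_nonneg ht0 (sub_nonneg.2 h2.le), mul_nonneg (sub_nonneg.2 ht1) ht0, sq_nonneg t,
    mul_nonneg ht0 (by linarith : (0:ℝ) ≤ α - 1.7519)]

private lemma coreB_big (α f p : ℝ) (hp1 : 3.141592 < p) (hp2 : p < 3.141593)
    (h1 : p/2 < α) (h2 : α < 2) (hV : α+1 ≤ p*α/2) (hf0 : 0 ≤ f) (hf1 : f ≤ 0.7708) :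
    0 ≤ (α-p/2) + f*(1-p*α/4) + (p/12)*f^2 + f^3*(p*α/48-1/6) - (p/240)*f^4
        + f^5*(1/120-p*α/1440) := by
  have hV' : 0 ≤ p*α/2-α-1 := by linarith
  have hα : 1.7519 ≤ α := alphaB_lb α p hp1 hp2 h1 hV
  nlinarith [mul_nonneg hf0 hV', mul_nonneg (sub_nonneg.2 hf1) hV',
    mul_nonneg hf0 (by linarith : (0:ℝ) ≤ α - p/2),
    sq_nonneg f, mul_nonneg (mul_nonneg hf0 hf0) hf0,
    mul_nonneg (mul_nonneg (mul_nonneg hf0 hf0) hf0) hf0,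
    mul_nonneg (mul_nonneg (mul_nonneg (mul_nonneg hf0 hf0) hf0) hf0) hf0,
    mul_nonneg (mul_nonneg hf0 hf0) (sub_nonneg.2 hf1),
    mul_nonneg (mul_nonneg (mul_nonneg hf0 hf0) hf0) (sub_nonneg.2 hf1),
    mul_nonneg (mul_nonneg hf0 (sub_nonneg.2 hf1)) (by linarith : (0:ℝ) ≤ α - 1.7519),
    mul_nonneg (mul_nonneg hf0 hf0) (by linarith : (0:ℝ) ≤ α - 1.7519),
    mul_nonneg (mul_nonneg hf0 hf0) (by linarith : (0:ℝ) ≤ 2 - α)]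

private lemma low_theta (α θ : ℝ) (hα1 : 1.57 ≤ α) (hα2 : α ≤ 2)
    (hθ0 : 0 ≤ θ) (hθ1 : θ ≤ 1.5708) :
    4*(α^2-1)*Real.sin θ ≤ α^2*(θ*(α+Real.cos θ)) := by
  have hs := sin_upper5 hθ0
  have hc := cos_lower6 hθ0
  have hcoef : (0:ℝ) ≤ 4*(α^2-1) := by nlinarith
  have e1 := mul_le_mul_of_nonneg_left hs hcoef
  have e2 := mul_le_mul_of_nonneg_left (mul_le_mul_of_nonneg_left hc hθ0) (sq_nonneg α)
  have ht1 : θ^2 ≤ 2.4675 := by nlinarith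
  have ht0 : (0:ℝ) ≤ θ^2 := sq_nonneg θ
  have hQ := coreQ α (θ^2) hα1 hα2 ht0 ht1
  linarith [e1, e2, mul_nonneg hθ0 hQ]

private lemma up_theta (α θ : ℝ) (h1 : Real.pi/2 < α) (h2 : α < 2)
    (hθ0 : 0 ≤ θ) (hθ1 : θ ≤ Real.pi/2) :
    θ*(α+Real.cos θ) ≤ max (Real.pi*α/2) (α+1) * Real.sin θ := by
  have hp1 := Real.pi_gt_d6
  have hp2 := Real.pi_lt_d6
  rcases le_total (Real.pi*α/2) (α+1) with hM | hM
  · rw [max_eq_right hM]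
    rcases le_total θ 1.29 with hsp | hsp
    · -- small θ
      have hs := sin_lower7 hθ0
      have hc := cos_upper4 hθ0
      have hα2 : α ≤ 1.752 := alphaA_ub α Real.pi hp1 h1 hM
      have ht1 : θ^2 ≤ 1.6641 := by nlinarith
      have ht0 : (0:ℝ) ≤ θ^2 := sq_nonneg θ
      have hbr := coreA_small α (θ^2) (by linarith) hα2 ht0 ht1
      have e1 := mul_le_mul_of_nonneg_left hs (by linarith : (0:ℝ) ≤ α+1)
      have e2 := mul_le_mul_of_nonneg_left hc hθ0
      linarith [e1, e2, mul_nonneg (mul_nonneg hθ0 (mul_nonneg hθ0 hθ0)) hbr]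
    · -- large θ
      have hφ0 : 0 ≤ Real.pi/2 - θ := by linarith
      have hφ1 : Real.pi/2 - θ ≤ 0.281 := by linarith
      have hsin := Real.sin_le hφ0
      have hcos := Real.one_sub_sq_div_two_le_cos (x := Real.pi/2 - θ)
      have hθeq : θ = Real.pi/2 - (Real.pi/2 - θ) := by ring
      rw [hθeq, Real.sin_pi_div_two_sub, Real.cos_pi_div_two_sub]
      set φ := Real.pi/2 - θ with hφdef
      -- goal : (π/2 - φ)*(α + sin φ) ≤ (α+1)*cos φ
      have e1 : (Real.pi/2-φ)*(α+Real.sin φ) ≤ (Real.pi/2-φ)*(α+φ) :=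
        mul_le_mul_of_nonneg_left (by linarith) (by linarith)
      have e2 : (α+1)*(1-φ^2/2) ≤ (α+1)*Real.cos φ :=
        mul_le_mul_of_nonneg_left hcos (by linarith)
      have hφ0' : 0 ≤ φ := hφ0
      have hcore : (Real.pi/2-φ)*(α+φ) ≤ (α+1)*(1-φ^2/2) :=
        coreA_large α φ Real.pi hp1 hp2 h1 h2 hM hφ0' hφ1
      calc (Real.pi/2-φ)*(α+Real.sin φ) ≤ (α+1)*(1-φ^2/2) := le_trans e1 hcore
        _ ≤ (α+1)*Real.cos φ := e2
  · rw [max_eq_left hM]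
    have hα : 1.7519 ≤ α := alphaB_lb α Real.pi hp1 hp2 h1 hM
    have hMpos : (0:ℝ) ≤ Real.pi*α/2 := by nlinarith [hp1, hα]
    rcases le_total θ 0.8 with hsp | hsp
    · -- small θ
      have hs := sin_lower3 hθ0
      have hc := cos_upper4 hθ0
      have ht0 : (0:ℝ) ≤ θ^2 := sq_nonneg θ
      have ht1 : θ^2 ≤ 0.64 := by nlinarith
      have hbr := coreB_small α (θ^2) Real.pi hp1 hp2 h1 h2 hM ht0 ht1
      have e1 := mul_le_mul_of_nonneg_left hs hMpos
      have e2 := mul_le_mul_of_nonneg_left hc hθ0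
      linarith [e1, e2, mul_nonneg hθ0 hbr]
    · -- large θ
      have hφ0 : 0 ≤ Real.pi/2 - θ := by linarith
      have hφ1 : Real.pi/2 - θ ≤ 0.7708 := by linarith
      have hsu := sin_upper5 hφ0
      have hcl := cos_lower6 hφ0
      have hθeq : θ = Real.pi/2 - (Real.pi/2 - θ) := by ring
      rw [hθeq, Real.sin_pi_div_two_sub, Real.cos_pi_div_two_sub]
      set φ := Real.pi/2 - θ with hφdef
      have hφ0' : 0 ≤ φ := hφ0
      -- goal : (π/2 - φ)*(α + sin φ) ≤ (π*α/2)*cos φ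
      have e1 : (Real.pi/2-φ)*(α+Real.sin φ) ≤ (Real.pi/2-φ)*(α+φ-φ^3/6+φ^5/120) :=
        mul_le_mul_of_nonneg_left (by linarith) (by linarith)
      have e2 : (Real.pi*α/2)*(1-φ^2/2+φ^4/24-φ^6/720) ≤ (Real.pi*α/2)*Real.cos φ :=
        mul_le_mul_of_nonneg_left hcl hMpos
      have hR := coreB_big α φ Real.pi hp1 hp2 h1 h2 hM hφ0' hφ1
      linarith [e1, e2, mul_nonneg hφ0' hR]

theorem stmt_11 (α : ℝ) (h1 : Real.pi / 2 < α) (h2 : α < 2)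
    (x : ℝ) (hx : 0 ≤ x) (hx1 : x ≤ 1) :
    4 * (1 - 1 / α ^ 2) * x / (α + Real.sqrt (1 - x ^ 2)) ≤ Real.arcsin x ∧
    Real.arcsin x ≤ max (Real.pi * α / 2) (α + 1) * x / (α + Real.sqrt (1 - x ^ 2)) := by
  have hp1 := Real.pi_gt_d6
  have hp2 := Real.pi_lt_d6
  have hα0 : (1.57:ℝ) < α := by linarith
  have hθ0 : 0 ≤ Real.arcsin x := Real.arcsin_nonneg.2 hx
  have hθ1 : Real.arcsin x ≤ Real.pi/2 := Real.arcsin_le_pi_div_two x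
  have hsin : Real.sin (Real.arcsin x) = x := Real.sin_arcsin (by linarith) hx1
  have hcos : Real.cos (Real.arcsin x) = Real.sqrt (1 - x^2) := Real.cos_arcsin x
  have hsq : 0 ≤ Real.sqrt (1 - x^2) := Real.sqrt_nonneg _
  have hd : 0 < α + Real.sqrt (1 - x^2) := by linarith
  constructor
  · rw [div_le_iff₀ hd]
    have key := low_theta α (Real.arcsin x) hα0.le h2.le hθ0 (by linarith)
    rw [hsin, hcos] at key
    have hα2 : (0:ℝ) < α^2 := by positivity
    have e : 4*(1-1/α^2)*x = (4*(α^2-1)*x)/α^2 := by field_simp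
    rw [e, div_le_iff₀ hα2]
    nlinarith [key]
  · rw [le_div_iff₀ hd]
    have key := up_theta α (Real.arcsin x) h1 h2 hθ0 hθ1
    rw [hsin, hcos] at key
    linarith [key]
end

section
/- If 0 < α ≤ π/2, then for all t with 0 ≤ t ≤ π/2, (πα/2)·sin t / (α + cos t) ≤ t ≤ (α+1)·sin t / (α + cos t). -/
open Real Set

private lemma pisq : Real.pi ^ 2 < 10 := by
  nlinarith [Real.pi_lt_d2, Real.pi_pos]

/-- helper: monotone on a closed interval from a pointwise derivative -/
private lemma mono_aux {F F' : ℝ → ℝ} (hF : ∀ t, HasDerivAt F (F' t) t) {a b : ℝ}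
    (h : ∀ t ∈ Set.Ioo a b, 0 ≤ F' t) : MonotoneOn F (Set.Icc a b) := by
  apply monotoneOn_of_deriv_nonneg (convex_Icc a b)
  · exact fun t _ => (hF t).differentiableAt.continuousAt.continuousWithinAt
  · intro t ht
    exact (hF t).differentiableAt.differentiableWithinAt
  · intro t ht
    rw [interior_Icc] at ht
    rw [(hF t).deriv]
    exact h t ht

private lemma anti_aux {F F' : ℝ → ℝ} (hF : ∀ t, HasDerivAt F (F' t) t) {a b : ℝ}
    (h : ∀ t ∈ Set.Ioo a b, F' t ≤ 0) : AntitoneOn F (Set.Icc a b) := by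
  apply antitoneOn_of_deriv_nonpos (convex_Icc a b)
  · exact fun t _ => (hF t).differentiableAt.continuousAt.continuousWithinAt
  · intro t ht
    exact (hF t).differentiableAt.differentiableWithinAt
  · intro t ht
    rw [interior_Icc] at ht
    rw [(hF t).deriv]
    exact h t ht

noncomputable def gg (t : ℝ) : ℝ := t * (π/2 + Real.cos t) - π^2/4 * Real.sin t
noncomputable def gg1 (t : ℝ) : ℝ := π/2 + Real.cos t - t * Real.sin t - π^2/4 * Real.cos t
noncomputable def gg2 (t : ℝ) : ℝ := (π^2/4 - 2) * Real.sin t - t * Real.cos t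
noncomputable def gg3 (t : ℝ) : ℝ := (π^2/4 - 3) * Real.cos t + t * Real.sin t

private lemma hgg (t : ℝ) : HasDerivAt gg (gg1 t) t := by
  have h := ((hasDerivAt_id t).mul ((hasDerivAt_const t (π/2)).add (Real.hasDerivAt_cos t))).sub
    ((Real.hasDerivAt_sin t).const_mul (π^2/4))
  refine h.congr_deriv ?_
  simp only [id_eq, Pi.add_apply]
  unfold gg1; ring

private lemma hgg1 (t : ℝ) : HasDerivAt gg1 (gg2 t) t := by
  have h := ((((hasDerivAt_const t (π/2)).add (Real.hasDerivAt_cos t)).sub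
    ((hasDerivAt_id t).mul (Real.hasDerivAt_sin t))).sub
    ((Real.hasDerivAt_cos t).const_mul (π^2/4)))
  refine h.congr_deriv ?_
  simp only [id_eq, Pi.add_apply]
  unfold gg2; ring

private lemma hgg2 (t : ℝ) : HasDerivAt gg2 (gg3 t) t := by
  have h := ((Real.hasDerivAt_sin t).const_mul (π^2/4 - 2)).sub
    ((hasDerivAt_id t).mul (Real.hasDerivAt_cos t))
  refine h.congr_deriv ?_
  simp only [id_eq, Pi.add_apply]
  unfold gg3; ring

private lemma hgg3 (t : ℝ) : HasDerivAt gg3 ((4 - π^2/4) * Real.sin t + t * Real.cos t) t := by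
  have h := ((Real.hasDerivAt_cos t).const_mul (π^2/4 - 3)).add
    ((hasDerivAt_id t).mul (Real.hasDerivAt_sin t))
  refine h.congr_deriv ?_
  simp only [id_eq, Pi.add_apply]
  ring

private lemma gg3_mono : MonotoneOn gg3 (Set.Icc 0 (π/2)) := by
  apply mono_aux hgg3
  intro t ht
  have hs : 0 ≤ Real.sin t := Real.sin_nonneg_of_nonneg_of_le_pi ht.1.le
    (le_trans ht.2.le (by linarith [Real.pi_pos]))
  have hc : 0 ≤ Real.cos t := Real.cos_nonneg_of_mem_Icc ⟨by linarith [ht.1, Real.pi_pos], ht.2.le⟩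
  nlinarith [pisq, ht.1]

private lemma gg2_zero : gg2 0 = 0 := by simp [gg2]

/-- once gg2 is positive it stays nonneg -/
private lemma U {v u : ℝ} (hv : v ∈ Set.Icc 0 (π/2)) (hu : u ∈ Set.Icc v (π/2))
    (hpos : 0 < gg2 v) : 0 ≤ gg2 u := by
  by_cases h : 0 ≤ gg3 v
  · have hmono : MonotoneOn gg2 (Set.Icc v (π/2)) := by
      apply mono_aux hgg2
      intro w hw
      have : gg3 v ≤ gg3 w := gg3_mono hv ⟨le_trans hv.1 hw.1.le, hw.2.le⟩ hw.1.le
      linarith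
    have := hmono (Set.left_mem_Icc.2 (le_trans hu.1 hu.2)) hu hu.1
    linarith
  · push_neg at h
    have hanti : AntitoneOn gg2 (Set.Icc 0 v) := by
      apply anti_aux hgg2
      intro w hw
      have : gg3 w ≤ gg3 v := gg3_mono ⟨hw.1.le, le_trans hw.2.le hv.2⟩ hv hw.2.le
      linarith
    have := hanti (Set.left_mem_Icc.2 hv.1) (Set.right_mem_Icc.2 hv.1) hv.1
    rw [gg2_zero] at this
    linarith

private lemma gg1_pi2 : gg1 (π/2) = 0 := by
  unfold gg1; rw [Real.cos_pi_div_two, Real.sin_pi_div_two]; ring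

private lemma gg_zero : gg 0 = 0 := by simp [gg]

private lemma gg_pi2 : gg (π/2) = 0 := by
  unfold gg; rw [Real.cos_pi_div_two, Real.sin_pi_div_two]; ring

/-- Lemma A: the special case α = π/2 of the lower bound. -/
private lemma lemA {t : ℝ} (ht : 0 ≤ t) (ht1 : t ≤ π/2) : 0 ≤ gg t := by
  by_cases hc : ∀ s ∈ Set.Icc (0:ℝ) t, 0 ≤ gg1 s
  · have hmono : MonotoneOn gg (Set.Icc 0 t) := by
      apply mono_aux hgg
      intro s hs
      exact hc s ⟨hs.1.le, hs.2.le⟩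
    have := hmono (Set.left_mem_Icc.2 ht) (Set.right_mem_Icc.2 ht) ht
    rw [gg_zero] at this; exact this
  · push_neg at hc
    obtain ⟨s, hs, hsneg⟩ := hc
    have key : ∀ u ∈ Set.Icc t (π/2), gg1 u ≤ 0 := by
      intro u hu
      by_contra hcon
      push_neg at hcon
      have hsu : s < u := by
        rcases lt_or_ge s u with h | h
        · exact h
        · have : u ≤ s := h
          have h1 : gg1 s ≤ gg1 s := le_refl _
          -- s ≤ t ≤ u ≤ s so s = u, contradiction with signs
          have heq : s = u := le_antisymm (le_trans hs.2 hu.1) h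
          rw [heq] at hsneg; linarith
      have hupi : u < π/2 := by
        rcases lt_or_eq_of_le hu.2 with h | h
        · exact h
        · rw [h, gg1_pi2] at hcon; linarith
      obtain ⟨w', hw', hw'eq⟩ := exists_hasDerivAt_eq_slope gg1 gg2 hsu
        (fun x _ => (hgg1 x).differentiableAt.continuousAt.continuousWithinAt)
        (fun x _ => hgg1 x)
      obtain ⟨w, hw, hweq⟩ := exists_hasDerivAt_eq_slope gg1 gg2 hupi
        (fun x _ => (hgg1 x).differentiableAt.continuousAt.continuousWithinAt)
        (fun x _ => hgg1 x)
      have hw'pos : 0 < gg2 w' := by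
        rw [hw'eq]
        apply div_pos (by linarith) (by linarith)
      have hwneg : gg2 w < 0 := by
        rw [hweq, gg1_pi2]
        apply div_neg_of_neg_of_pos (by linarith) (by linarith)
      have : 0 ≤ gg2 w := U ⟨by linarith [hw'.1, hs.1], by linarith [hw'.2, hupi]⟩
        ⟨by linarith [hw'.2, hw.1], by linarith [hw.2]⟩ hw'pos
      linarith
    have hanti : AntitoneOn gg (Set.Icc t (π/2)) := by
      apply anti_aux hgg
      intro s' hs'
      exact key s' ⟨hs'.1.le, hs'.2.le⟩
    have := hanti (Set.left_mem_Icc.2 ht1) (Set.right_mem_Icc.2 ht1) ht1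
    rw [gg_pi2] at this; exact this

noncomputable def ff (t : ℝ) : ℝ := (π/2 + 1) * Real.sin t - t * (π/2 + Real.cos t)
noncomputable def ff1 (t : ℝ) : ℝ := π/2 * Real.cos t - π/2 + t * Real.sin t
noncomputable def ff2 (t : ℝ) : ℝ := (1 - π/2) * Real.sin t + t * Real.cos t
noncomputable def ff3 (t : ℝ) : ℝ := (2 - π/2) * Real.cos t - t * Real.sin t

private lemma hff (t : ℝ) : HasDerivAt ff (ff1 t) t := by
  have h := ((Real.hasDerivAt_sin t).const_mul (π/2 + 1)).sub
    ((hasDerivAt_id t).mul ((hasDerivAt_const t (π/2)).add (Real.hasDerivAt_cos t)))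
  refine h.congr_deriv ?_
  simp only [id_eq, Pi.add_apply]
  unfold ff1; ring

private lemma hff1 (t : ℝ) : HasDerivAt ff1 (ff2 t) t := by
  have h := (((Real.hasDerivAt_cos t).const_mul (π/2)).sub (hasDerivAt_const t (π/2))).add
    ((hasDerivAt_id t).mul (Real.hasDerivAt_sin t))
  refine h.congr_deriv ?_
  simp only [id_eq, Pi.add_apply]
  unfold ff2; ring

private lemma hff2 (t : ℝ) : HasDerivAt ff2 (ff3 t) t := by
  have h := ((Real.hasDerivAt_sin t).const_mul (1 - π/2)).add
    ((hasDerivAt_id t).mul (Real.hasDerivAt_cos t))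
  refine h.congr_deriv ?_
  simp only [id_eq, Pi.add_apply]
  unfold ff3; ring

private lemma hff3 (t : ℝ) : HasDerivAt ff3 ((π/2 - 3) * Real.sin t - t * Real.cos t) t := by
  have h := ((Real.hasDerivAt_cos t).const_mul (2 - π/2)).sub
    ((hasDerivAt_id t).mul (Real.hasDerivAt_sin t))
  refine h.congr_deriv ?_
  simp only [id_eq, Pi.add_apply]
  ring

private lemma ff3_anti : AntitoneOn ff3 (Set.Icc 0 (π/2)) := by
  apply anti_aux hff3
  intro t ht
  have hs : 0 ≤ Real.sin t := Real.sin_nonneg_of_nonneg_of_le_pi ht.1.le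
    (le_trans ht.2.le (by linarith [Real.pi_pos]))
  have hc : 0 ≤ Real.cos t := Real.cos_nonneg_of_mem_Icc ⟨by linarith [ht.1, Real.pi_pos], ht.2.le⟩
  have h1 : 0 ≤ (3 - π/2) * Real.sin t := mul_nonneg (by nlinarith [Real.pi_lt_d2]) hs
  have h2 : 0 ≤ t * Real.cos t := mul_nonneg ht.1.le hc
  linarith

private lemma ff2_zero : ff2 0 = 0 := by simp [ff2]

/-- once ff2 is negative it stays nonpos -/
private lemma U' {s u : ℝ} (hs : s ∈ Set.Icc 0 (π/2)) (hu : u ∈ Set.Icc s (π/2))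
    (hneg : ff2 s < 0) : ff2 u ≤ 0 := by
  by_contra hcon
  push_neg at hcon
  have hsu : s < u := by
    rcases lt_or_ge s u with h | h
    · exact h
    · have heq : s = u := le_antisymm hu.1 h
      rw [heq] at hneg; linarith
  have hs0 : 0 < s := by
    rcases lt_or_eq_of_le hs.1 with h | h
    · exact h
    · rw [← h, ff2_zero] at hneg; linarith
  obtain ⟨w0, hw0, hw0eq⟩ := exists_hasDerivAt_eq_slope ff2 ff3 hs0
    (fun x _ => (hff2 x).differentiableAt.continuousAt.continuousWithinAt)
    (fun x _ => hff2 x)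
  obtain ⟨w', hw', hw'eq⟩ := exists_hasDerivAt_eq_slope ff2 ff3 hsu
    (fun x _ => (hff2 x).differentiableAt.continuousAt.continuousWithinAt)
    (fun x _ => hff2 x)
  have hw0neg : ff3 w0 < 0 := by
    rw [hw0eq, ff2_zero]
    apply div_neg_of_neg_of_pos (by linarith) (by linarith)
  have hw'pos : 0 < ff3 w' := by
    rw [hw'eq]
    apply div_pos (by linarith) (by linarith)
  have : ff3 w' ≤ ff3 w0 := ff3_anti ⟨hw0.1.le, by linarith [hw0.2, hw'.2, hu.2]⟩
    ⟨by linarith [hw'.1, hs.1], by linarith [hw'.2, hu.2]⟩ (by linarith [hw0.2, hw'.1])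
  linarith

private lemma ff1_zero : ff1 0 = 0 := by simp [ff1]
private lemma ff1_pi2 : ff1 (π/2) = 0 := by
  unfold ff1; rw [Real.cos_pi_div_two, Real.sin_pi_div_two]; ring
private lemma ff_zero : ff 0 = 0 := by simp [ff]

private lemma ff1_nonneg {t : ℝ} (ht : 0 ≤ t) (ht1 : t ≤ π/2) : 0 ≤ ff1 t := by
  by_cases hc : ∀ s ∈ Set.Icc (0:ℝ) t, 0 ≤ ff2 s
  · have hmono : MonotoneOn ff1 (Set.Icc 0 t) := by
      apply mono_aux hff1
      intro s hs
      exact hc s ⟨hs.1.le, hs.2.le⟩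
    have := hmono (Set.left_mem_Icc.2 ht) (Set.right_mem_Icc.2 ht) ht
    rw [ff1_zero] at this; exact this
  · push_neg at hc
    obtain ⟨s, hs, hsneg⟩ := hc
    have key : ∀ u ∈ Set.Icc t (π/2), ff2 u ≤ 0 := by
      intro u hu
      exact U' ⟨hs.1, le_trans hs.2 ht1⟩ ⟨le_trans hs.2 hu.1, hu.2⟩ hsneg
    have hanti : AntitoneOn ff1 (Set.Icc t (π/2)) := by
      apply anti_aux hff1
      intro s' hs'
      exact key s' ⟨hs'.1.le, hs'.2.le⟩
    have := hanti (Set.left_mem_Icc.2 ht1) (Set.right_mem_Icc.2 ht1) ht1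
    rw [ff1_pi2] at this; exact this

/-- Lemma B: the special case α = π/2 of the upper bound. -/
private lemma lemB {t : ℝ} (ht : 0 ≤ t) (ht1 : t ≤ π/2) : 0 ≤ ff t := by
  have hmono : MonotoneOn ff (Set.Icc 0 (π/2)) := by
    apply mono_aux hff
    intro s hs
    exact ff1_nonneg hs.1.le hs.2.le
  have := hmono (Set.left_mem_Icc.2 (by linarith [Real.pi_pos])) ⟨ht, ht1⟩ ht
  rw [ff_zero] at this; exact this

theorem stmt_13 (α : ℝ) (hα0 : 0 < α) (hα : α ≤ Real.pi / 2)
    (t : ℝ) (ht : 0 ≤ t) (ht1 : t ≤ Real.pi / 2) :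
    (Real.pi * α / 2) * Real.sin t / (α + Real.cos t) ≤ t ∧
    t ≤ (α + 1) * Real.sin t / (α + Real.cos t) := by
  have hc : 0 ≤ Real.cos t := Real.cos_nonneg_of_mem_Icc ⟨by linarith, ht1⟩
  have hden : 0 < α + Real.cos t := by linarith
  have hjordan : 2 / π * t ≤ Real.sin t := Real.mul_le_sin ht ht1
  have hπ : 0 < π := Real.pi_pos
  have hsinle : Real.sin t ≤ t := Real.sin_le ht
  have hA : 0 ≤ gg t := lemA ht ht1
  have hB : 0 ≤ ff t := lemB ht ht1
  rw [gg] at hA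
  rw [ff] at hB
  have hjordan' : t - π/2 * Real.sin t ≤ 0 := by
    have := mul_le_mul_of_nonneg_left hjordan (le_of_lt (by positivity : (0:ℝ) < π/2))
    rw [show π/2 * (2/π * t) = t by field_simp] at this
    linarith
  constructor
  · rw [div_le_iff₀ hden]
    -- need: π*α/2 * sin t ≤ t * (α + cos t)
    -- t*(α+cos t) - π*α/2*sin t = α*(t - π/2*sin t) + t*cos t
    -- ≥ (π/2)*(t - π/2*sin t) + t*cos t = gg t ≥ 0
    nlinarith [mul_le_mul_of_nonpos_right hα hjordan']
  · rw [le_div_iff₀ hden]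
    -- (α+1)*sin t - t*(α+cos t) = α*(sin t - t) + sin t - t*cos t
    -- ≥ (π/2)*(sin t - t) + sin t - t*cos t = ff t ≥ 0
    nlinarith [mul_le_mul_of_nonpos_right hα (by linarith : Real.sin t - t ≤ 0)]
end

section
/- For all x with 0 ≤ x ≤ 1, (π²/4)x / (π/2 + √(1−x²)) ≤ arcsin x ≤ (π/2 + 1)x / (π/2 + √(1−x²)). -/
open Real Set

lemma sf_sin_ge (x : ℝ) (hx : 0 ≤ x) : x - x^3/6 ≤ Real.sin x := by
  have hd : ∀ y : ℝ, HasDerivAt (fun y => Real.sin y - (y - y^3/6))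
      (Real.cos y - (1 - y^2/2)) y := by
    intro y
    have h1 := (Real.hasDerivAt_sin y).sub
      ((hasDerivAt_id y).sub ((hasDerivAt_pow 3 y).div_const 6))
    refine h1.congr_deriv ?_
    norm_num
    ring
  have key : MonotoneOn (fun y => Real.sin y - (y - y^3/6)) (Set.Ici 0) := by
    apply monotoneOn_of_deriv_nonneg (convex_Ici 0)
    · exact Continuous.continuousOn (by continuity)
    · intro y _; exact ((hd y).differentiableAt).differentiableWithinAt
    · intro y _
      rw [(hd y).deriv]
      have := Real.one_sub_sq_div_two_le_cos (x := y)
      linarith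
  have h0 := key (Set.mem_Ici.mpr (le_refl 0)) (Set.mem_Ici.mpr hx) hx
  simp only [Real.sin_zero] at h0
  norm_num at h0
  linarith

lemma sf_cos_le (x : ℝ) (hx : 0 ≤ x) : Real.cos x ≤ 1 - x^2/2 + x^4/24 := by
  have hd : ∀ y : ℝ, HasDerivAt (fun y => 1 - y^2/2 + y^4/24 - Real.cos y)
      (Real.sin y - (y - y^3/6)) y := by
    intro y
    have h1 := ((((hasDerivAt_const y (1:ℝ)).sub ((hasDerivAt_pow 2 y).div_const 2)).add
      ((hasDerivAt_pow 4 y).div_const 24)).sub (Real.hasDerivAt_cos y))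
    refine h1.congr_deriv ?_
    norm_num
    ring
  have key : MonotoneOn (fun y => 1 - y^2/2 + y^4/24 - Real.cos y) (Set.Ici 0) := by
    apply monotoneOn_of_deriv_nonneg (convex_Ici 0)
    · exact Continuous.continuousOn (by continuity)
    · intro y _; exact ((hd y).differentiableAt).differentiableWithinAt
    · intro y hy
      rw [(hd y).deriv]
      have := sf_sin_ge y (le_of_lt (by simpa using hy))
      linarith
  have h0 := key (Set.mem_Ici.mpr (le_refl 0)) (Set.mem_Ici.mpr hx) hx
  simp only [Real.cos_zero] at h0
  norm_num at h0
  linarith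

lemma sf_sin_le (x : ℝ) (hx : 0 ≤ x) : Real.sin x ≤ x - x^3/6 + x^5/120 := by
  have hd : ∀ y : ℝ, HasDerivAt (fun y => (y - y^3/6 + y^5/120) - Real.sin y)
      (1 - y^2/2 + y^4/24 - Real.cos y) y := by
    intro y
    have h1 := ((((hasDerivAt_id y).sub ((hasDerivAt_pow 3 y).div_const 6)).add
      ((hasDerivAt_pow 5 y).div_const 120)).sub (Real.hasDerivAt_sin y))
    refine h1.congr_deriv ?_
    norm_num
    ring
  have key : MonotoneOn (fun y => (y - y^3/6 + y^5/120) - Real.sin y) (Set.Ici 0) := by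
    apply monotoneOn_of_deriv_nonneg (convex_Ici 0)
    · exact Continuous.continuousOn (by continuity)
    · intro y _; exact ((hd y).differentiableAt).differentiableWithinAt
    · intro y hy
      rw [(hd y).deriv]
      have := sf_cos_le y (le_of_lt (by simpa using hy))
      linarith
  have h0 := key (Set.mem_Ici.mpr (le_refl 0)) (Set.mem_Ici.mpr hx) hx
  simp only [Real.sin_zero] at h0
  norm_num at h0
  linarith

lemma sf_cos_ge (x : ℝ) (hx : 0 ≤ x) : 1 - x^2/2 + x^4/24 - x^6/720 ≤ Real.cos x := by
  have hd : ∀ y : ℝ, HasDerivAt (fun y => Real.cos y - (1 - y^2/2 + y^4/24 - y^6/720))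
      ((y - y^3/6 + y^5/120) - Real.sin y) y := by
    intro y
    have h1 := (Real.hasDerivAt_cos y).sub
      ((((hasDerivAt_const y (1:ℝ)).sub ((hasDerivAt_pow 2 y).div_const 2)).add
      ((hasDerivAt_pow 4 y).div_const 24)).sub ((hasDerivAt_pow 6 y).div_const 720))
    refine h1.congr_deriv ?_
    norm_num
    ring
  have key : MonotoneOn (fun y => Real.cos y - (1 - y^2/2 + y^4/24 - y^6/720)) (Set.Ici 0) := by
    apply monotoneOn_of_deriv_nonneg (convex_Ici 0)
    · exact Continuous.continuousOn (by continuity)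
    · intro y _; exact ((hd y).differentiableAt).differentiableWithinAt
    · intro y hy
      rw [(hd y).deriv]
      have := sf_sin_le y (le_of_lt (by simpa using hy))
      linarith
  have h0 := key (Set.mem_Ici.mpr (le_refl 0)) (Set.mem_Ici.mpr hx) hx
  simp only [Real.cos_zero] at h0
  norm_num at h0
  linarith


lemma sf_P1 (t : ℝ) (h0 : 0 ≤ t) (ht : t ≤ 1) :
    2.467425*(t - t^3/6 + t^5/120) ≤ t*(2.570796 - t^2/2 + t^4/24 - t^6/720) := by
  have hu : 0 ≤ 1 - t^2 := by nlinarith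
  have h2 : 0 ≤ t^2 := sq_nonneg t
  nlinarith [mul_nonneg h0 hu, mul_nonneg (mul_nonneg h0 hu) h2,
    mul_nonneg (mul_nonneg (mul_nonneg h0 hu) h2) h2]

lemma sf_P2 (t : ℝ) (h0 : 0 ≤ t) (ht : t ≤ 1) :
    t*(Real.pi/2 + 1 - t^2/2 + t^4/24) ≤ (Real.pi/2 + 1)*(t - t^3/6) := by
  have hπ2 : Real.pi < 3.141593 := Real.pi_lt_d6
  have h3 : 0 ≤ t^3 := by positivity
  have hu : 0 ≤ 1 - t^2 := by nlinarith
  nlinarith [mul_nonneg h3 hu, h3, Real.pi_gt_d6]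

lemma sf_P3 (φ : ℝ) (h0 : 0 ≤ φ) (hb : φ ≤ Real.pi/2 - 1) :
    Real.pi^2/4*(1 - φ^2/2 + φ^4/24) ≤
      Real.pi^2/4 + Real.pi/2*(φ - φ^3/6) - Real.pi/2*φ - φ*φ := by
  have hπ1 : (3.141592:ℝ) < Real.pi := Real.pi_gt_d6
  have hπ2 : Real.pi < 3.141593 := Real.pi_lt_d6
  have hq1 : (9.8695 : ℝ) ≤ Real.pi^2 := by nlinarith
  have hq2 : Real.pi^2 ≤ 9.8697 := by nlinarith
  have h2 : 0 ≤ φ^2 := sq_nonneg φ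
  have hb' : 0 ≤ 0.570797 - φ := by linarith
  nlinarith [mul_nonneg h2 hb', mul_nonneg (mul_nonneg h2 hb') hb', mul_nonneg h2 h2,
    mul_nonneg (mul_nonneg h2 h0) hb', mul_nonneg (mul_nonneg h2 h2) hb']

lemma sf_P4 (φ : ℝ) (h0 : 0 ≤ φ) (hb : φ ≤ Real.pi/2 - 1) :
    Real.pi^2/4 + Real.pi/2*(φ - φ^3/6 + φ^5/120) - Real.pi/2*φ - φ*(φ - φ^3/6) ≤
      (Real.pi/2 + 1)*(1 - φ^2/2) := by
  have hπ1 : (3.141592:ℝ) < Real.pi := Real.pi_gt_d6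
  have hπ2 : Real.pi < 3.141593 := Real.pi_lt_d6
  have h2 : 0 ≤ φ^2 := sq_nonneg φ
  have hb' : 0 ≤ 0.570797 - φ := by linarith
  nlinarith [mul_nonneg h2 hb', mul_nonneg (mul_nonneg h2 hb') hb', mul_nonneg h2 h2,
    mul_nonneg (mul_nonneg h2 h2) hb', mul_nonneg (mul_nonneg h2 h2) h0]

set_option maxHeartbeats 1600000 in
lemma sf_key (θ : ℝ) (h0 : 0 ≤ θ) (h1 : θ ≤ Real.pi/2) :
    Real.pi^2/4 * Real.sin θ ≤ θ * (Real.pi/2 + Real.cos θ) ∧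
    θ * (Real.pi/2 + Real.cos θ) ≤ (Real.pi/2 + 1) * Real.sin θ := by
  have hπ1 : (3.141592 : ℝ) < π := Real.pi_gt_d6
  have hπ2 : π < 3.141593 := Real.pi_lt_d6
  have hq1 : (9.8695 : ℝ) ≤ π^2 := by nlinarith
  have hq2 : π^2 ≤ 9.8697 := by nlinarith
  rcases le_or_gt θ 1 with hθ | hθ
  · -- θ ≤ 1
    have hs1 := sf_sin_ge θ h0
    have hs2 := sf_sin_le θ h0
    have hc1 := sf_cos_ge θ h0
    have hc2 := sf_cos_le θ h0
    have hu : 0 ≤ 1 - θ^2 := by nlinarith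
    have h2 : 0 ≤ θ^2 := sq_nonneg θ
    have hpoly : 0 ≤ θ - θ^3/6 + θ^5/120 := by
      nlinarith [mul_nonneg h0 hu, mul_nonneg (mul_nonneg h0 h2) h2]
    constructor
    · calc π^2/4 * Real.sin θ ≤ π^2/4 * (θ - θ^3/6 + θ^5/120) := by nlinarith
        _ ≤ 2.467425 * (θ - θ^3/6 + θ^5/120) := by nlinarith
        _ ≤ θ*(2.570796 - θ^2/2 + θ^4/24 - θ^6/720) := sf_P1 θ h0 hθ
        _ ≤ θ * (π/2 + Real.cos θ) := by
            have e1 : 0 ≤ θ * ((π/2 + Real.cos θ) - (2.570796 - θ^2/2 + θ^4/24 - θ^6/720)) :=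
              mul_nonneg h0 (by nlinarith)
            nlinarith [e1]
    · calc θ * (π/2 + Real.cos θ) ≤ θ*(π/2 + 1 - θ^2/2 + θ^4/24) := by
            have e1 : 0 ≤ θ * ((1 - θ^2/2 + θ^4/24) - Real.cos θ) := mul_nonneg h0 (by linarith)
            nlinarith [e1]
        _ ≤ (π/2 + 1)*(θ - θ^3/6) := sf_P2 θ h0 hθ
        _ ≤ (π/2 + 1) * Real.sin θ := by nlinarith
  · -- θ > 1
    obtain ⟨φ, rfl⟩ : ∃ φ, θ = π/2 - φ := ⟨π/2 - θ, by ring⟩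
    have hφ0 : 0 ≤ φ := by linarith
    have hφb : φ ≤ π/2 - 1 := by linarith
    have hb' : 0 ≤ 0.570797 - φ := by linarith
    have h2 : 0 ≤ φ^2 := sq_nonneg φ
    rw [Real.sin_pi_div_two_sub, Real.cos_pi_div_two_sub]
    have hs1 := sf_sin_ge φ hφ0
    have hs2 := sf_sin_le φ hφ0
    have hc2 := sf_cos_le φ hφ0
    have hsl := Real.sin_le hφ0
    have hcl := Real.one_sub_sq_div_two_le_cos (x := φ)
    constructor
    · calc π^2/4 * Real.cos φ ≤ π^2/4 * (1 - φ^2/2 + φ^4/24) :=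
            mul_le_mul_of_nonneg_left hc2 (by positivity)
        _ ≤ π^2/4 + π/2*(φ - φ^3/6) - π/2*φ - φ*φ := sf_P3 φ hφ0 hφb
        _ ≤ (π/2 - φ) * (π/2 + Real.sin φ) := by
            have e1 : 0 ≤ (π/2) * (Real.sin φ - (φ - φ^3/6)) :=
              mul_nonneg (by positivity) (by linarith)
            have e2 : 0 ≤ φ * (φ - Real.sin φ) := mul_nonneg hφ0 (by linarith)
            linarith [e1, e2, sq_nonneg π]
    · calc (π/2 - φ) * (π/2 + Real.sin φ)
          ≤ π^2/4 + π/2*(φ - φ^3/6 + φ^5/120) - π/2*φ - φ*(φ - φ^3/6) := by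
            have e1 : 0 ≤ (π/2) * ((φ - φ^3/6 + φ^5/120) - Real.sin φ) :=
              mul_nonneg (by positivity) (by linarith)
            have e2 : 0 ≤ φ * (Real.sin φ - (φ - φ^3/6)) := mul_nonneg hφ0 (by linarith)
            linarith [e1, e2]
        _ ≤ (π/2 + 1)*(1 - φ^2/2) := sf_P4 φ hφ0 hφb
        _ ≤ (π/2 + 1) * Real.cos φ :=
            mul_le_mul_of_nonneg_left hcl (by positivity)

theorem stmt_15 (x : ℝ) (hx : 0 ≤ x) (hx1 : x ≤ 1) :
    (Real.pi ^ 2 / 4) * x / (Real.pi / 2 + Real.sqrt (1 - x ^ 2)) ≤ Real.arcsin x ∧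
    Real.arcsin x ≤ (Real.pi / 2 + 1) * x / (Real.pi / 2 + Real.sqrt (1 - x ^ 2)) := by
  have hm1 : -1 ≤ x := by linarith
  have hsin : Real.sin (Real.arcsin x) = x := Real.sin_arcsin hm1 hx1
  have hcos : Real.cos (Real.arcsin x) = Real.sqrt (1 - x ^ 2) := Real.cos_arcsin x
  have hD : 0 < Real.pi / 2 + Real.sqrt (1 - x ^ 2) := by positivity
  have h0 : 0 ≤ Real.arcsin x := Real.arcsin_nonneg.mpr hx
  have h2 : Real.arcsin x ≤ Real.pi / 2 := Real.arcsin_le_pi_div_two x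
  obtain ⟨k1, k2⟩ := sf_key (Real.arcsin x) h0 h2
  rw [hsin, hcos] at k1 k2
  constructor
  · rw [div_le_iff₀ hD]
    linarith
  · rw [le_div_iff₀ hD]
    linarith
end

section
/- For all x with 0 < x < 1, arcsin x > (8/3)x / (√3 + √(1−x²)). -/
set_option maxHeartbeats 1000000 in
lemma stmt_16_polyt (t a : ℝ) (ht : 0 ≤ t) (ht8 : t ≤ 0.15422) (ha : (1.732:ℝ) ≤ a) :
    32 / 3 * ((1 - 0.146 * t) * (1 - 0.4919 * t) * (1 - 2 * t * (1 - 0.188 * t) ^ 2))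
      + 32 * t * ((1 - 0.146 * t) * (1 - 0.4919 * t)) ^ 2 < 4 * (a + 1) := by
  nlinarith [ht, ht8, ha, sq_nonneg (t - 0.1156), mul_nonneg ht (sq_nonneg (t - 0.1156)),
    mul_nonneg ht ht, mul_nonneg (mul_nonneg ht ht) ht,
    mul_nonneg (sub_nonneg.2 ht8) (sq_nonneg (t - 0.1156)),
    mul_nonneg (mul_nonneg ht ht) (sub_nonneg.2 ht8),
    mul_nonneg (mul_nonneg (mul_nonneg ht ht) ht) (sub_nonneg.2 ht8)]

set_option maxHeartbeats 1000000 in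
lemma stmt_16_key (θ : ℝ) (h1 : 0 < θ) (h2 : θ < Real.pi / 2) :
    8 / 3 * Real.sin θ < θ * (Real.sqrt 3 + Real.cos θ) := by
  set u : ℝ := θ / 4 with hu_def
  have hu : 0 < u := by positivity
  have hpi : Real.pi < 3.1416 := by
    have := Real.pi_lt_d6; linarith
  have hu8 : u ≤ 0.3927 := by rw [hu_def]; linarith
  have hu2 : u ^ 2 ≤ 0.15422 := by
    have := mul_le_mul hu8 hu8 hu.le (show (0:ℝ) ≤ 0.3927 by norm_num)
    nlinarith [this]
  have hu1 : |u| ≤ 1 := by rw [abs_of_pos hu]; linarith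
  have hsb := Real.sin_bound hu1
  have hcb := Real.cos_bound hu1
  rw [abs_of_pos hu] at hsb hcb
  have hcube : (0:ℝ) ≤ u ^ 3 * (0.3927 - u) :=
    mul_nonneg (pow_pos hu 3).le (by linarith)
  have hsq : (0:ℝ) ≤ u ^ 2 * (0.15422 - u ^ 2) :=
    mul_nonneg (sq_nonneg u) (by linarith)
  have hlin : (0:ℝ) ≤ u * (0.15422 - u ^ 2) :=
    mul_nonneg hu.le (by linarith)
  have hs_ub : Real.sin u ≤ u - u ^ 3 / 6 + 5 / 96 * u ^ 4 := by
    have := (abs_le.1 hsb).2; nlinarith [this]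
  have hs_lb : u - u ^ 3 / 6 - 5 / 96 * u ^ 4 ≤ Real.sin u := by
    have := (abs_le.1 hsb).1; nlinarith [this]
  have hc_ub : Real.cos u ≤ 1 - u ^ 2 / 2 + 5 / 96 * u ^ 4 := by
    have := (abs_le.1 hcb).2; nlinarith [this]
  have hs_pos : 0 < Real.sin u :=
    Real.sin_pos_of_pos_of_lt_pi hu (by linarith [Real.pi_gt_three])
  have hc_pos : 0 < Real.cos u :=
    Real.cos_pos_of_mem_Ioo ⟨by linarith [Real.pi_gt_three], by linarith [Real.pi_gt_three]⟩
  set s := Real.sin u with hs_def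
  set c := Real.cos u with hc_def
  have pyth : s ^ 2 + c ^ 2 = 1 := Real.sin_sq_add_cos_sq u
  have hs_ub' : s ≤ u - 0.146 * u ^ 3 := by linarith [hs_ub, hcube]
  have hs_lb' : u - 0.188 * u ^ 3 ≤ s := by linarith [hs_lb, hcube]
  have hc_ub' : c ≤ 1 - 0.4919 * u ^ 2 := by linarith [hc_ub, hsq]
  have hslb_pos : 0 ≤ u - 0.188 * u ^ 3 := by linarith [hlin]
  set P := (u - 0.146 * u ^ 3) * (1 - 0.4919 * u ^ 2) with hPdef
  set B := 1 - 2 * (u - 0.188 * u ^ 3) ^ 2 with hBdef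
  have hA1 : (0:ℝ) ≤ 1 - 0.4919 * u ^ 2 := by linarith [hu2]
  have hP : s * c ≤ P := mul_le_mul hs_ub' hc_ub' hc_pos.le (by linarith)
  have hsc_pos : 0 < s * c := mul_pos hs_pos hc_pos
  have hP_nonneg : (0:ℝ) ≤ P := le_trans hsc_pos.le hP
  have hB : 2 * c ^ 2 - 1 ≤ B := by
    have h2 : (u - 0.188 * u ^ 3) ^ 2 ≤ s ^ 2 := pow_le_pow_left₀ hslb_pos hs_lb' 2
    rw [hBdef]; linarith [pyth, h2]
  have hc92 : (0.92:ℝ) ≤ c := by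
    have hclb : 1 - u ^ 2 / 2 ≤ c := Real.one_sub_sq_div_two_le_cos
    linarith [hu2]
  have hB_pos : 0 < 2 * c ^ 2 - 1 := by
    have h92 := mul_le_mul hc92 hc92 (by norm_num) (by linarith : (0:ℝ) ≤ c)
    nlinarith [h92]
  have hPB : s * c * (2 * c ^ 2 - 1) ≤ P * B :=
    mul_le_mul hP hB hB_pos.le hP_nonneg
  have hP2 : (s * c) ^ 2 ≤ P ^ 2 := pow_le_pow_left₀ hsc_pos.le hP 2
  have ha : (1.732 : ℝ) ≤ Real.sqrt 3 := by
    rw [show (1.732:ℝ) = Real.sqrt (1.732 ^ 2) from (Real.sqrt_sq (by norm_num)).symm]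
    exact Real.sqrt_le_sqrt (by norm_num)
  have hθ : θ = 2 * (2 * u) := by rw [hu_def]; ring
  have hθ4 : θ = 4 * u := by rw [hu_def]; ring
  have hsin : Real.sin θ = 4 * (s * c) * (2 * c ^ 2 - 1) := by
    rw [hθ, Real.sin_two_mul, Real.sin_two_mul, Real.cos_two_mul]; ring
  have hcosθ : Real.cos θ = 1 - 8 * (s * c) ^ 2 := by
    rw [hθ, Real.cos_two_mul, Real.cos_two_mul]
    linear_combination (8 * c ^ 2) * pyth
  rw [hsin, hcosθ, hθ4]
  have hpt := stmt_16_polyt (u ^ 2) (Real.sqrt 3) (sq_nonneg u) hu2 ha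
  have hmul := mul_lt_mul_of_pos_left hpt hu
  have hgoal : 32 / 3 * (P * B) < 4 * u * (Real.sqrt 3 + (1 - 8 * P ^ 2)) := by
    rw [hPdef, hBdef]; linarith [hmul]
  have hmono : 4 * u * (Real.sqrt 3 + (1 - 8 * P ^ 2))
      ≤ 4 * u * (Real.sqrt 3 + (1 - 8 * (s * c) ^ 2)) := by
    linarith [mul_nonneg hu.le (sub_nonneg.2 hP2)]
  calc 8 / 3 * (4 * (s * c) * (2 * c ^ 2 - 1))
      = 32 / 3 * (s * c * (2 * c ^ 2 - 1)) := by ring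
    _ ≤ 32 / 3 * (P * B) := mul_le_mul_of_nonneg_left hPB (by norm_num)
    _ < 4 * u * (Real.sqrt 3 + (1 - 8 * P ^ 2)) := hgoal
    _ ≤ 4 * u * (Real.sqrt 3 + (1 - 8 * (s * c) ^ 2)) := hmono

theorem stmt_16 (x : ℝ) (hx : 0 < x) (hx1 : x < 1) :
    Real.arcsin x > (8 / 3) * x / (Real.sqrt 3 + Real.sqrt (1 - x ^ 2)) := by
  have hx2 : -1 ≤ x := by linarith
  have hden : 0 < Real.sqrt 3 + Real.sqrt (1 - x ^ 2) := by
    have h3 : (0:ℝ) < Real.sqrt 3 := Real.sqrt_pos.2 (by norm_num)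
    have := Real.sqrt_nonneg (1 - x ^ 2)
    linarith
  rw [gt_iff_lt, div_lt_iff₀ hden]
  have hsin : Real.sin (Real.arcsin x) = x := Real.sin_arcsin hx2 hx1.le
  have hcos : Real.cos (Real.arcsin x) = Real.sqrt (1 - x ^ 2) := Real.cos_arcsin x
  calc 8 / 3 * x = 8 / 3 * Real.sin (Real.arcsin x) := by rw [hsin]
    _ < Real.arcsin x * (Real.sqrt 3 + Real.cos (Real.arcsin x)) :=
        stmt_16_key _ (Real.arcsin_pos.2 hx) ((Real.arcsin_lt_pi_div_two).2 hx1)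
    _ = Real.arcsin x * (Real.sqrt 3 + Real.sqrt (1 - x ^ 2)) := by rw [hcos]
end

section
/- For every real α ≤ 0, the function f_α(x) = (α + √(1−x²)) · (arcsin x)/x is strictly decreasing on (0, 1). -/
theorem stmt_17 (α : ℝ) (hα : α ≤ 0) :
    StrictAntiOn (fun x : ℝ => (α + Real.sqrt (1 - x ^ 2)) * Real.arcsin x / x)
      (Set.Ioo 0 1) := by
  have hder : ∀ x ∈ Set.Ioo (0:ℝ) 1,
      HasDerivAt (fun x : ℝ => (α + Real.sqrt (1 - x ^ 2)) * Real.arcsin x / x)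
        ((((-(x / Real.sqrt (1 - x ^ 2))) * Real.arcsin x
            + (α + Real.sqrt (1 - x ^ 2)) * (1 / Real.sqrt (1 - x ^ 2))) * x
          - (α + Real.sqrt (1 - x ^ 2)) * Real.arcsin x * 1) / x ^ 2) x := by
    intro x hx
    obtain ⟨hx0, hx1⟩ := hx
    have h1 : (0:ℝ) < 1 - x ^ 2 := by nlinarith
    have hs0 : Real.sqrt (1 - x ^ 2) ≠ 0 := ne_of_gt (Real.sqrt_pos.mpr h1)
    have hsq : HasDerivAt (fun x : ℝ => Real.sqrt (1 - x ^ 2))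
        (-(x / Real.sqrt (1 - x ^ 2))) x := by
      have h2 : HasDerivAt (fun x : ℝ => 1 - x ^ 2) (-(2 * x)) x := by
        simpa using (hasDerivAt_pow 2 x).const_sub 1
      have h3 := h2.sqrt h1.ne'
      convert h3 using 1
      field_simp
    have ha : HasDerivAt Real.arcsin (1 / Real.sqrt (1 - x ^ 2)) x :=
      Real.hasDerivAt_arcsin (by linarith) (by linarith)
    exact ((hsq.const_add α).mul ha).div (hasDerivAt_id x) (ne_of_gt hx0)
  apply strictAntiOn_of_deriv_neg (convex_Ioo 0 1)
  · intro x hx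
    exact (hder x hx).continuousAt.continuousWithinAt
  · intro x hx
    rw [interior_Ioo] at hx
    rw [(hder x hx).deriv]
    obtain ⟨hx0, hx1⟩ := hx
    have h1 : (0:ℝ) < 1 - x ^ 2 := by nlinarith
    set s := Real.sqrt (1 - x ^ 2) with hs
    set a := Real.arcsin x with hadef
    have hs0 : 0 < s := Real.sqrt_pos.mpr h1
    have hs2 : s ^ 2 = 1 - x ^ 2 := Real.sq_sqrt h1.le
    have hs1 : s < 1 := by nlinarith
    have ha0 : 0 < a := Real.arcsin_pos.mpr hx0
    have hxa : x < a := by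
      have := Real.sin_lt ha0
      rwa [hadef, Real.sin_arcsin (by linarith) (by linarith)] at this
    have hap : a < Real.pi / 2 := Real.arcsin_lt_pi_div_two.mpr hx1
    have htan : a < x / s := by
      have := Real.lt_tan ha0 hap
      rwa [hadef, Real.tan_arcsin] at this
    have has : a * s < x := (lt_div_iff₀ hs0).mp htan
    have h2 : a * s ^ 2 = a * (1 - x ^ 2) := by rw [hs2]
    have hnum : ((-(x / s)) * a + (α + s) * (1 / s)) * x - (α + s) * a * 1 < 0 := by
      have heq : ((-(x / s)) * a + (α + s) * (1 / s)) * x - (α + s) * a * 1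
          = (x * (α + s - x * a) - (α + s) * a * s) / s := by
        field_simp
        ring
      rw [heq]
      apply div_neg_of_neg_of_pos _ hs0
      nlinarith [h2, mul_nonneg (neg_nonneg.2 hα) (sub_nonneg.2 has.le),
        mul_lt_mul_of_pos_left hs1 hx0, hxa]
    exact div_neg_of_neg_of_pos hnum (by positivity)
end

section
/- For every real α ≥ 2 and every x ∈ (0,1), the function h_α(x) = x(α + √(1−x²)) / (1 + α√(1−x²)) − arcsin x is positive; equivalently, arcsin x < x(α + √(1−x²)) / (1 + α√(1−x²)). -/
lemma key_18 (θ : ℝ) (h0 : 0 < θ) (h1 : θ < Real.pi/2) :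
    θ * (1 + 2*Real.cos θ) < Real.sin θ * (2 + Real.cos θ) := by
  set g : ℝ → ℝ := fun t => Real.sin t * (2 + Real.cos t) - t*(1+2*Real.cos t) with hg
  have hderiv : ∀ t : ℝ, HasDerivAt g (2 * Real.sin t * (t - Real.sin t)) t := by
    intro t
    have h : HasDerivAt g (Real.cos t * (2 + Real.cos t) + Real.sin t * (0 + -Real.sin t)
        - (1 * (1+2*Real.cos t) + t * (0 + 2 * -Real.sin t))) t := by
      apply HasDerivAt.sub
      · exact (Real.hasDerivAt_sin t).mul ((hasDerivAt_const t 2).add (Real.hasDerivAt_cos t))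
      · exact (hasDerivAt_id t).mul ((hasDerivAt_const t 1).add ((Real.hasDerivAt_cos t).const_mul 2))
    convert h using 1
    nlinarith [Real.sin_sq_add_cos_sq t]
  have hmono : StrictMonoOn g (Set.Icc 0 (Real.pi/2)) := by
    apply strictMonoOn_of_deriv_pos (convex_Icc _ _)
    · exact Continuous.continuousOn (by fun_prop)
    · intro t ht
      rw [interior_Icc] at ht
      rw [(hderiv t).deriv]
      have hs : 0 < Real.sin t := Real.sin_pos_of_pos_of_lt_pi ht.1 (by linarith [Real.pi_pos, ht.2])
      have hlt : Real.sin t < t := Real.sin_lt ht.1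
      nlinarith
  have h2 := hmono (Set.left_mem_Icc.2 (by positivity)) ⟨h0.le, h1.le⟩ h0
  simp only [hg, Real.sin_zero, Real.cos_zero, zero_mul, mul_zero] at h2
  norm_num at h2
  linarith

theorem stmt_18 (α : ℝ) (hα : 2 ≤ α) (x : ℝ) (hx : 0 < x) (hx1 : x < 1) :
    Real.arcsin x <
      x * (α + Real.sqrt (1 - x ^ 2)) / (1 + α * Real.sqrt (1 - x ^ 2)) := by
  set y := Real.sqrt (1 - x^2) with hy
  have hy0 : 0 < y := Real.sqrt_pos.2 (by nlinarith)
  have hy1 : y ≤ 1 := Real.sqrt_le_one.2 (by nlinarith)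
  have hyx : y^2 = 1 - x^2 := Real.sq_sqrt (by nlinarith)
  set θ := Real.arcsin x with hθ
  have hθ0 : 0 < θ := Real.arcsin_pos.2 hx
  have hθ1 : θ < Real.pi/2 := Real.arcsin_lt_pi_div_two.2 hx1
  have hsin : Real.sin θ = x := Real.sin_arcsin (by linarith) (by linarith)
  have hcos : Real.cos θ = y := by rw [hθ, Real.cos_arcsin, hy]
  have hk := key_18 θ hθ0 hθ1
  rw [hsin, hcos] at hk
  have hden : 0 < 1 + α * y := by nlinarith
  rw [lt_div_iff₀ hden]
  nlinarith [mul_lt_mul_of_pos_right hk hden,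
    mul_nonneg (mul_nonneg hx.le (sub_nonneg.2 hα)) (mul_nonneg (sub_nonneg.2 hy1) (by positivity : (0:ℝ) ≤ 1 + y))]
end

section
/- For every u with 0 ≤ u ≤ 1 and every real α with π/2 < α < 2, (α + u)² / (1 + αu) ≥ 4(1 − 1/α²). -/
theorem stmt_19 (u : ℝ) (hu : 0 ≤ u) (hu1 : u ≤ 1)
    (α : ℝ) (h1 : Real.pi / 2 < α) (h2 : α < 2) :
    (α + u) ^ 2 / (1 + α * u) ≥ 4 * (1 - 1 / α ^ 2) := by
  have hpi := Real.pi_gt_three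
  have hα : (1:ℝ) < α := by linarith
  have hden : (0:ℝ) < 1 + α * u := by nlinarith
  have hα2 : (0:ℝ) < α ^ 2 := by positivity
  have hinv : 1 / α ^ 2 * α ^ 2 = 1 := by field_simp
  rw [ge_iff_le, le_div_iff₀ hden]
  nlinarith [sq_nonneg (α * u - α ^ 2 + 2), mul_pos hα2 hden, sq_nonneg (α*u - α^2 + 2)]
end
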